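/- Let g be a symmetric invertible 4×4 real matrix with det g < 0, let W have Weyl symmetries with respect to g, let S be a symmetric 4×4 real matrix, and let K_{jabc} and Ω^{de}{}_{abc,h} be defined as in the context. Then for all j,a,b,c in Fin 4: Σ_{p,q,r,d,e} (Ω^{ed}{}_{abc,p} − Ω^{de}{}_{abc,p}) S_{qe} g_{rd} η^{pqr}{}_j = K_{jabc}. (This is the component form of the identity *(𝒦_{abc}) = θ^{j} K_{jabc}, where 𝒦_{abc} = 2 Ω^{[ed]}{}_{abc}∧S_e∧θ_d and for a 3-form with coefficients F_{pqr} the Hodge dual has components Σ_{p,q,r} F_{pqr} η^{pqr}{}_j.) -/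

import Mathlib

open Finset

/-- The Levi-Civita alternating symbol on `Fin 4`: the sign of `(a,b,c,d)` as a
permutation of `(0,1,2,3)`, and `0` if two indices coincide. -/
noncomputable def eps4 (a b c d : Fin 4) : ℝ :=
  (((b : ℕ) : ℝ) - ((a : ℕ) : ℝ)) * (((c : ℕ) : ℝ) - ((a : ℕ) : ℝ)) *
    (((d : ℕ) : ℝ) - ((a : ℕ) : ℝ)) * (((c : ℕ) : ℝ) - ((b : ℕ) : ℝ)) *
    (((d : ℕ) : ℝ) - ((b : ℕ) : ℝ)) * (((d : ℕ) : ℝ) - ((c : ℕ) : ℝ)) / 12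

/-- The volume element `η_{abcd} = √(−det g)·ε_{abcd}`. -/
noncomputable def eta4 (g : Fin 4 → Fin 4 → ℝ) (a b c d : Fin 4) : ℝ :=
  Real.sqrt (-(Matrix.of g).det) * eps4 a b c d

/-- `η^{pqr}{}_s`, obtained by raising the first three indices of `η` with `g^{ab}`. -/
noncomputable def etaUp3 (g ginv : Fin 4 → Fin 4 → ℝ) (p q r s : Fin 4) : ℝ :=
  ∑ a, ∑ b, ∑ c, ginv p a * ginv q b * ginv r c * eta4 g a b c s

/-- The right dual of the Weyl tensor, `(W*)_{abcd} = (1/2) η_{cd}{}^{eh} W_{abeh}`. -/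
noncomputable def Wstar (g ginv : Fin 4 → Fin 4 → ℝ)
    (W : Fin 4 → Fin 4 → Fin 4 → Fin 4 → ℝ) (a b c d : Fin 4) : ℝ :=
  (1 / 2) * ∑ e, ∑ h, (∑ m, ∑ n, ginv e m * ginv h n * eta4 g c d m n) * W a b e h

/-- The components `Ω^{de}{}_{abc,h}` of the 1-form `Ω^{de}{}_{abc}`:
`Ω^{de}{}_{abc,h} = −δ_c{}^{e} (W*)^{d}{}_{bah} − δ_b{}^{e} (W*)^{d}{}_{cah}
  + (1/2) g_{bc} (W*)^{de}{}_{ah}`. -/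
noncomputable def OmegaC (g ginv : Fin 4 → Fin 4 → ℝ)
    (W : Fin 4 → Fin 4 → Fin 4 → Fin 4 → ℝ) (d e a b c h : Fin 4) : ℝ :=
  -(if c = e then (1 : ℝ) else 0) * (∑ p, ginv d p * Wstar g ginv W p b a h)
    - (if b = e then (1 : ℝ) else 0) * (∑ p, ginv d p * Wstar g ginv W p c a h)
    + (1 / 2) * g b c * (∑ p, ∑ q, ginv d p * ginv e q * Wstar g ginv W p q a h)

/-- The tensor `K_{jabc}` built from the Schouten-type tensor `S` and the Weyl-type
tensor `W`. -/
noncomputable def Ktensor (g ginv S : Fin 4 → Fin 4 → ℝ)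
    (W : Fin 4 → Fin 4 → Fin 4 → Fin 4 → ℝ) (j a b c : Fin 4) : ℝ :=
  (∑ d, (∑ e, S c e * ginv e d) * W a b j d)
    + (∑ d, (∑ e, S b e * ginv e d) * W a c j d)
    + (∑ d, (∑ e, S a e * ginv e d) * W b d c j)
    + (∑ d, (∑ e, S a e * ginv e d) * W b j c d)
    - g b c * (∑ d, ∑ e, (∑ p, ∑ q, ginv d p * ginv e q * S p q) * W a d j e)
    - 2 * g a j * (∑ d, ∑ e, (∑ p, ∑ q, ginv d p * ginv e q * S p q) * W b d c e)
    + g a c * (∑ d, ∑ e, (∑ p, ∑ q, ginv d p * ginv e q * S p q) * W b d j e)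
    + g a b * (∑ d, ∑ e, (∑ p, ∑ q, ginv d p * ginv e q * S p q) * W c d j e)

private def epsZ (a b c d : Fin 4) : ℤ :=
  Int.sign ((((b:ℤ)) - a) * (((c:ℤ)) - a) * (((d:ℤ)) - a) * (((c:ℤ)) - b) * (((d:ℤ)) - b) * (((d:ℤ)) - c))

private lemma epsZ_mul12 : ∀ a b c d : Fin 4,
    ((((b:ℕ):ℤ)) - ((a:ℕ):ℤ)) * ((((c:ℕ):ℤ)) - ((a:ℕ):ℤ)) * ((((d:ℕ):ℤ)) - ((a:ℕ):ℤ)) *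
      ((((c:ℕ):ℤ)) - ((b:ℕ):ℤ)) * ((((d:ℕ):ℤ)) - ((b:ℕ):ℤ)) * ((((d:ℕ):ℤ)) - ((c:ℕ):ℤ))
    = 12 * epsZ a b c d := by decide

private lemma eps4_eq (a b c d : Fin 4) : eps4 a b c d = ((epsZ a b c d : ℤ) : ℝ) := by
  have h2 : (((b : ℕ) : ℝ) - ((a : ℕ) : ℝ)) * (((c : ℕ) : ℝ) - ((a : ℕ) : ℝ)) *
      (((d : ℕ) : ℝ) - ((a : ℕ) : ℝ)) * (((c : ℕ) : ℝ) - ((b : ℕ) : ℝ)) *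
      (((d : ℕ) : ℝ) - ((b : ℕ) : ℝ)) * (((d : ℕ) : ℝ) - ((c : ℕ) : ℝ))
      = 12 * ((epsZ a b c d : ℤ) : ℝ) := by
    exact_mod_cast congrArg (fun z : ℤ => (z : ℝ)) (epsZ_mul12 a b c d)
  unfold eps4; rw [h2]; ring

private def dl (u v : Fin 4) : ℝ := if u = v then 1 else 0
private def dZ (u v : Fin 4) : ℤ := if u = v then 1 else 0

@[simp, norm_cast] private lemma dZ_cast (u v : Fin 4) : ((dZ u v : ℤ) : ℝ) = dl u v := by
  unfold dZ dl; split <;> simp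

private lemma eps_epsZ : ∀ a m n x y z : Fin 4,
    epsZ a 0 m n * epsZ 0 x y z + epsZ a 1 m n * epsZ 1 x y z +
      epsZ a 2 m n * epsZ 2 x y z + epsZ a 3 m n * epsZ 3 x y z
    = -(dZ a x * (dZ m y * dZ n z - dZ m z * dZ n y)
        - dZ a y * (dZ m x * dZ n z - dZ m z * dZ n x)
        + dZ a z * (dZ m x * dZ n y - dZ m y * dZ n x)) := by decide

private lemma eps_eps (a m n x y z : Fin 4) :
    ∑ p, eps4 a p m n * eps4 p x y z
    = -(dl a x * (dl m y * dl n z - dl m z * dl n y)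
        - dl a y * (dl m x * dl n z - dl m z * dl n x)
        + dl a z * (dl m x * dl n y - dl m y * dl n x)) := by
  rw [Fin.sum_univ_four]
  simp only [eps4_eq, dl]
  have h := eps_epsZ a m n x y z
  simp only [dZ] at h
  have h2 := congrArg (fun z : ℤ => (z : ℝ)) h
  push_cast [apply_ite (fun z : ℤ => (z : ℝ))] at h2
  exact h2
@[simp] private lemma epsV_0_0_0_0 : eps4 0 0 0 0 = 0 := by
  rw [eps4_eq]; exact_mod_cast (by decide : epsZ 0 0 0 0 = 0)
@[simp] private lemma epsV_0_0_0_1 : eps4 0 0 0 1 = 0 := by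
  rw [eps4_eq]; exact_mod_cast (by decide : epsZ 0 0 0 1 = 0)
@[simp] private lemma epsV_0_0_0_2 : eps4 0 0 0 2 = 0 := by
  rw [eps4_eq]; exact_mod_cast (by decide : epsZ 0 0 0 2 = 0)
@[simp] private lemma epsV_0_0_0_3 : eps4 0 0 0 3 = 0 := by
  rw [eps4_eq]; exact_mod_cast (by decide : epsZ 0 0 0 3 = 0)
@[simp] private lemma epsV_0_0_1_0 : eps4 0 0 1 0 = 0 := by
  rw [eps4_eq]; exact_mod_cast (by decide : epsZ 0 0 1 0 = 0)
@[simp] private lemma epsV_0_0_1_1 : eps4 0 0 1 1 = 0 := by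
  rw [eps4_eq]; exact_mod_cast (by decide : epsZ 0 0 1 1 = 0)
@[simp] private lemma epsV_0_0_1_2 : eps4 0 0 1 2 = 0 := by
  rw [eps4_eq]; exact_mod_cast (by decide : epsZ 0 0 1 2 = 0)
@[simp] private lemma epsV_0_0_1_3 : eps4 0 0 1 3 = 0 := by
  rw [eps4_eq]; exact_mod_cast (by decide : epsZ 0 0 1 3 = 0)
@[simp] private lemma epsV_0_0_2_0 : eps4 0 0 2 0 = 0 := by
  rw [eps4_eq]; exact_mod_cast (by decide : epsZ 0 0 2 0 = 0)
@[simp] private lemma epsV_0_0_2_1 : eps4 0 0 2 1 = 0 := by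
  rw [eps4_eq]; exact_mod_cast (by decide : epsZ 0 0 2 1 = 0)
@[simp] private lemma epsV_0_0_2_2 : eps4 0 0 2 2 = 0 := by
  rw [eps4_eq]; exact_mod_cast (by decide : epsZ 0 0 2 2 = 0)
@[simp] private lemma epsV_0_0_2_3 : eps4 0 0 2 3 = 0 := by
  rw [eps4_eq]; exact_mod_cast (by decide : epsZ 0 0 2 3 = 0)
@[simp] private lemma epsV_0_0_3_0 : eps4 0 0 3 0 = 0 := by
  rw [eps4_eq]; exact_mod_cast (by decide : epsZ 0 0 3 0 = 0)
@[simp] private lemma epsV_0_0_3_1 : eps4 0 0 3 1 = 0 := by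
  rw [eps4_eq]; exact_mod_cast (by decide : epsZ 0 0 3 1 = 0)
@[simp] private lemma epsV_0_0_3_2 : eps4 0 0 3 2 = 0 := by
  rw [eps4_eq]; exact_mod_cast (by decide : epsZ 0 0 3 2 = 0)
@[simp] private lemma epsV_0_0_3_3 : eps4 0 0 3 3 = 0 := by
  rw [eps4_eq]; exact_mod_cast (by decide : epsZ 0 0 3 3 = 0)
@[simp] private lemma epsV_0_1_0_0 : eps4 0 1 0 0 = 0 := by
  rw [eps4_eq]; exact_mod_cast (by decide : epsZ 0 1 0 0 = 0)
@[simp] private lemma epsV_0_1_0_1 : eps4 0 1 0 1 = 0 := by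
  rw [eps4_eq]; exact_mod_cast (by decide : epsZ 0 1 0 1 = 0)
@[simp] private lemma epsV_0_1_0_2 : eps4 0 1 0 2 = 0 := by
  rw [eps4_eq]; exact_mod_cast (by decide : epsZ 0 1 0 2 = 0)
@[simp] private lemma epsV_0_1_0_3 : eps4 0 1 0 3 = 0 := by
  rw [eps4_eq]; exact_mod_cast (by decide : epsZ 0 1 0 3 = 0)
@[simp] private lemma epsV_0_1_1_0 : eps4 0 1 1 0 = 0 := by
  rw [eps4_eq]; exact_mod_cast (by decide : epsZ 0 1 1 0 = 0)
@[simp] private lemma epsV_0_1_1_1 : eps4 0 1 1 1 = 0 := by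
  rw [eps4_eq]; exact_mod_cast (by decide : epsZ 0 1 1 1 = 0)
@[simp] private lemma epsV_0_1_1_2 : eps4 0 1 1 2 = 0 := by
  rw [eps4_eq]; exact_mod_cast (by decide : epsZ 0 1 1 2 = 0)
@[simp] private lemma epsV_0_1_1_3 : eps4 0 1 1 3 = 0 := by
  rw [eps4_eq]; exact_mod_cast (by decide : epsZ 0 1 1 3 = 0)
@[simp] private lemma epsV_0_1_2_0 : eps4 0 1 2 0 = 0 := by
  rw [eps4_eq]; exact_mod_cast (by decide : epsZ 0 1 2 0 = 0)
@[simp] private lemma epsV_0_1_2_1 : eps4 0 1 2 1 = 0 := by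
  rw [eps4_eq]; exact_mod_cast (by decide : epsZ 0 1 2 1 = 0)
@[simp] private lemma epsV_0_1_2_2 : eps4 0 1 2 2 = 0 := by
  rw [eps4_eq]; exact_mod_cast (by decide : epsZ 0 1 2 2 = 0)
@[simp] private lemma epsV_0_1_2_3 : eps4 0 1 2 3 = 1 := by
  rw [eps4_eq]; exact_mod_cast (by decide : epsZ 0 1 2 3 = 1)
@[simp] private lemma epsV_0_1_3_0 : eps4 0 1 3 0 = 0 := by
  rw [eps4_eq]; exact_mod_cast (by decide : epsZ 0 1 3 0 = 0)
@[simp] private lemma epsV_0_1_3_1 : eps4 0 1 3 1 = 0 := by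
  rw [eps4_eq]; exact_mod_cast (by decide : epsZ 0 1 3 1 = 0)
@[simp] private lemma epsV_0_1_3_2 : eps4 0 1 3 2 = (-1) := by
  rw [eps4_eq]; exact_mod_cast (by decide : epsZ 0 1 3 2 = (-1))
@[simp] private lemma epsV_0_1_3_3 : eps4 0 1 3 3 = 0 := by
  rw [eps4_eq]; exact_mod_cast (by decide : epsZ 0 1 3 3 = 0)
@[simp] private lemma epsV_0_2_0_0 : eps4 0 2 0 0 = 0 := by
  rw [eps4_eq]; exact_mod_cast (by decide : epsZ 0 2 0 0 = 0)
@[simp] private lemma epsV_0_2_0_1 : eps4 0 2 0 1 = 0 := by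
  rw [eps4_eq]; exact_mod_cast (by decide : epsZ 0 2 0 1 = 0)
@[simp] private lemma epsV_0_2_0_2 : eps4 0 2 0 2 = 0 := by
  rw [eps4_eq]; exact_mod_cast (by decide : epsZ 0 2 0 2 = 0)
@[simp] private lemma epsV_0_2_0_3 : eps4 0 2 0 3 = 0 := by
  rw [eps4_eq]; exact_mod_cast (by decide : epsZ 0 2 0 3 = 0)
@[simp] private lemma epsV_0_2_1_0 : eps4 0 2 1 0 = 0 := by
  rw [eps4_eq]; exact_mod_cast (by decide : epsZ 0 2 1 0 = 0)
@[simp] private lemma epsV_0_2_1_1 : eps4 0 2 1 1 = 0 := by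
  rw [eps4_eq]; exact_mod_cast (by decide : epsZ 0 2 1 1 = 0)
@[simp] private lemma epsV_0_2_1_2 : eps4 0 2 1 2 = 0 := by
  rw [eps4_eq]; exact_mod_cast (by decide : epsZ 0 2 1 2 = 0)
@[simp] private lemma epsV_0_2_1_3 : eps4 0 2 1 3 = (-1) := by
  rw [eps4_eq]; exact_mod_cast (by decide : epsZ 0 2 1 3 = (-1))
@[simp] private lemma epsV_0_2_2_0 : eps4 0 2 2 0 = 0 := by
  rw [eps4_eq]; exact_mod_cast (by decide : epsZ 0 2 2 0 = 0)
@[simp] private lemma epsV_0_2_2_1 : eps4 0 2 2 1 = 0 := by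
  rw [eps4_eq]; exact_mod_cast (by decide : epsZ 0 2 2 1 = 0)
@[simp] private lemma epsV_0_2_2_2 : eps4 0 2 2 2 = 0 := by
  rw [eps4_eq]; exact_mod_cast (by decide : epsZ 0 2 2 2 = 0)
@[simp] private lemma epsV_0_2_2_3 : eps4 0 2 2 3 = 0 := by
  rw [eps4_eq]; exact_mod_cast (by decide : epsZ 0 2 2 3 = 0)
@[simp] private lemma epsV_0_2_3_0 : eps4 0 2 3 0 = 0 := by
  rw [eps4_eq]; exact_mod_cast (by decide : epsZ 0 2 3 0 = 0)
@[simp] private lemma epsV_0_2_3_1 : eps4 0 2 3 1 = 1 := by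
  rw [eps4_eq]; exact_mod_cast (by decide : epsZ 0 2 3 1 = 1)
@[simp] private lemma epsV_0_2_3_2 : eps4 0 2 3 2 = 0 := by
  rw [eps4_eq]; exact_mod_cast (by decide : epsZ 0 2 3 2 = 0)
@[simp] private lemma epsV_0_2_3_3 : eps4 0 2 3 3 = 0 := by
  rw [eps4_eq]; exact_mod_cast (by decide : epsZ 0 2 3 3 = 0)
@[simp] private lemma epsV_0_3_0_0 : eps4 0 3 0 0 = 0 := by
  rw [eps4_eq]; exact_mod_cast (by decide : epsZ 0 3 0 0 = 0)
@[simp] private lemma epsV_0_3_0_1 : eps4 0 3 0 1 = 0 := by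
  rw [eps4_eq]; exact_mod_cast (by decide : epsZ 0 3 0 1 = 0)
@[simp] private lemma epsV_0_3_0_2 : eps4 0 3 0 2 = 0 := by
  rw [eps4_eq]; exact_mod_cast (by decide : epsZ 0 3 0 2 = 0)
@[simp] private lemma epsV_0_3_0_3 : eps4 0 3 0 3 = 0 := by
  rw [eps4_eq]; exact_mod_cast (by decide : epsZ 0 3 0 3 = 0)
@[simp] private lemma epsV_0_3_1_0 : eps4 0 3 1 0 = 0 := by
  rw [eps4_eq]; exact_mod_cast (by decide : epsZ 0 3 1 0 = 0)
@[simp] private lemma epsV_0_3_1_1 : eps4 0 3 1 1 = 0 := by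
  rw [eps4_eq]; exact_mod_cast (by decide : epsZ 0 3 1 1 = 0)
@[simp] private lemma epsV_0_3_1_2 : eps4 0 3 1 2 = 1 := by
  rw [eps4_eq]; exact_mod_cast (by decide : epsZ 0 3 1 2 = 1)
@[simp] private lemma epsV_0_3_1_3 : eps4 0 3 1 3 = 0 := by
  rw [eps4_eq]; exact_mod_cast (by decide : epsZ 0 3 1 3 = 0)
@[simp] private lemma epsV_0_3_2_0 : eps4 0 3 2 0 = 0 := by
  rw [eps4_eq]; exact_mod_cast (by decide : epsZ 0 3 2 0 = 0)
@[simp] private lemma epsV_0_3_2_1 : eps4 0 3 2 1 = (-1) := by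
  rw [eps4_eq]; exact_mod_cast (by decide : epsZ 0 3 2 1 = (-1))
@[simp] private lemma epsV_0_3_2_2 : eps4 0 3 2 2 = 0 := by
  rw [eps4_eq]; exact_mod_cast (by decide : epsZ 0 3 2 2 = 0)
@[simp] private lemma epsV_0_3_2_3 : eps4 0 3 2 3 = 0 := by
  rw [eps4_eq]; exact_mod_cast (by decide : epsZ 0 3 2 3 = 0)
@[simp] private lemma epsV_0_3_3_0 : eps4 0 3 3 0 = 0 := by
  rw [eps4_eq]; exact_mod_cast (by decide : epsZ 0 3 3 0 = 0)
@[simp] private lemma epsV_0_3_3_1 : eps4 0 3 3 1 = 0 := by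
  rw [eps4_eq]; exact_mod_cast (by decide : epsZ 0 3 3 1 = 0)
@[simp] private lemma epsV_0_3_3_2 : eps4 0 3 3 2 = 0 := by
  rw [eps4_eq]; exact_mod_cast (by decide : epsZ 0 3 3 2 = 0)
@[simp] private lemma epsV_0_3_3_3 : eps4 0 3 3 3 = 0 := by
  rw [eps4_eq]; exact_mod_cast (by decide : epsZ 0 3 3 3 = 0)
@[simp] private lemma epsV_1_0_0_0 : eps4 1 0 0 0 = 0 := by
  rw [eps4_eq]; exact_mod_cast (by decide : epsZ 1 0 0 0 = 0)
@[simp] private lemma epsV_1_0_0_1 : eps4 1 0 0 1 = 0 := by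
  rw [eps4_eq]; exact_mod_cast (by decide : epsZ 1 0 0 1 = 0)
@[simp] private lemma epsV_1_0_0_2 : eps4 1 0 0 2 = 0 := by
  rw [eps4_eq]; exact_mod_cast (by decide : epsZ 1 0 0 2 = 0)
@[simp] private lemma epsV_1_0_0_3 : eps4 1 0 0 3 = 0 := by
  rw [eps4_eq]; exact_mod_cast (by decide : epsZ 1 0 0 3 = 0)
@[simp] private lemma epsV_1_0_1_0 : eps4 1 0 1 0 = 0 := by
  rw [eps4_eq]; exact_mod_cast (by decide : epsZ 1 0 1 0 = 0)
@[simp] private lemma epsV_1_0_1_1 : eps4 1 0 1 1 = 0 := by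
  rw [eps4_eq]; exact_mod_cast (by decide : epsZ 1 0 1 1 = 0)
@[simp] private lemma epsV_1_0_1_2 : eps4 1 0 1 2 = 0 := by
  rw [eps4_eq]; exact_mod_cast (by decide : epsZ 1 0 1 2 = 0)
@[simp] private lemma epsV_1_0_1_3 : eps4 1 0 1 3 = 0 := by
  rw [eps4_eq]; exact_mod_cast (by decide : epsZ 1 0 1 3 = 0)
@[simp] private lemma epsV_1_0_2_0 : eps4 1 0 2 0 = 0 := by
  rw [eps4_eq]; exact_mod_cast (by decide : epsZ 1 0 2 0 = 0)
@[simp] private lemma epsV_1_0_2_1 : eps4 1 0 2 1 = 0 := by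
  rw [eps4_eq]; exact_mod_cast (by decide : epsZ 1 0 2 1 = 0)
@[simp] private lemma epsV_1_0_2_2 : eps4 1 0 2 2 = 0 := by
  rw [eps4_eq]; exact_mod_cast (by decide : epsZ 1 0 2 2 = 0)
@[simp] private lemma epsV_1_0_2_3 : eps4 1 0 2 3 = (-1) := by
  rw [eps4_eq]; exact_mod_cast (by decide : epsZ 1 0 2 3 = (-1))
@[simp] private lemma epsV_1_0_3_0 : eps4 1 0 3 0 = 0 := by
  rw [eps4_eq]; exact_mod_cast (by decide : epsZ 1 0 3 0 = 0)
@[simp] private lemma epsV_1_0_3_1 : eps4 1 0 3 1 = 0 := by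
  rw [eps4_eq]; exact_mod_cast (by decide : epsZ 1 0 3 1 = 0)
@[simp] private lemma epsV_1_0_3_2 : eps4 1 0 3 2 = 1 := by
  rw [eps4_eq]; exact_mod_cast (by decide : epsZ 1 0 3 2 = 1)
@[simp] private lemma epsV_1_0_3_3 : eps4 1 0 3 3 = 0 := by
  rw [eps4_eq]; exact_mod_cast (by decide : epsZ 1 0 3 3 = 0)
@[simp] private lemma epsV_1_1_0_0 : eps4 1 1 0 0 = 0 := by
  rw [eps4_eq]; exact_mod_cast (by decide : epsZ 1 1 0 0 = 0)
@[simp] private lemma epsV_1_1_0_1 : eps4 1 1 0 1 = 0 := by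
  rw [eps4_eq]; exact_mod_cast (by decide : epsZ 1 1 0 1 = 0)
@[simp] private lemma epsV_1_1_0_2 : eps4 1 1 0 2 = 0 := by
  rw [eps4_eq]; exact_mod_cast (by decide : epsZ 1 1 0 2 = 0)
@[simp] private lemma epsV_1_1_0_3 : eps4 1 1 0 3 = 0 := by
  rw [eps4_eq]; exact_mod_cast (by decide : epsZ 1 1 0 3 = 0)
@[simp] private lemma epsV_1_1_1_0 : eps4 1 1 1 0 = 0 := by
  rw [eps4_eq]; exact_mod_cast (by decide : epsZ 1 1 1 0 = 0)
@[simp] private lemma epsV_1_1_1_1 : eps4 1 1 1 1 = 0 := by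
  rw [eps4_eq]; exact_mod_cast (by decide : epsZ 1 1 1 1 = 0)
@[simp] private lemma epsV_1_1_1_2 : eps4 1 1 1 2 = 0 := by
  rw [eps4_eq]; exact_mod_cast (by decide : epsZ 1 1 1 2 = 0)
@[simp] private lemma epsV_1_1_1_3 : eps4 1 1 1 3 = 0 := by
  rw [eps4_eq]; exact_mod_cast (by decide : epsZ 1 1 1 3 = 0)
@[simp] private lemma epsV_1_1_2_0 : eps4 1 1 2 0 = 0 := by
  rw [eps4_eq]; exact_mod_cast (by decide : epsZ 1 1 2 0 = 0)
@[simp] private lemma epsV_1_1_2_1 : eps4 1 1 2 1 = 0 := by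
  rw [eps4_eq]; exact_mod_cast (by decide : epsZ 1 1 2 1 = 0)
@[simp] private lemma epsV_1_1_2_2 : eps4 1 1 2 2 = 0 := by
  rw [eps4_eq]; exact_mod_cast (by decide : epsZ 1 1 2 2 = 0)
@[simp] private lemma epsV_1_1_2_3 : eps4 1 1 2 3 = 0 := by
  rw [eps4_eq]; exact_mod_cast (by decide : epsZ 1 1 2 3 = 0)
@[simp] private lemma epsV_1_1_3_0 : eps4 1 1 3 0 = 0 := by
  rw [eps4_eq]; exact_mod_cast (by decide : epsZ 1 1 3 0 = 0)
@[simp] private lemma epsV_1_1_3_1 : eps4 1 1 3 1 = 0 := by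
  rw [eps4_eq]; exact_mod_cast (by decide : epsZ 1 1 3 1 = 0)
@[simp] private lemma epsV_1_1_3_2 : eps4 1 1 3 2 = 0 := by
  rw [eps4_eq]; exact_mod_cast (by decide : epsZ 1 1 3 2 = 0)
@[simp] private lemma epsV_1_1_3_3 : eps4 1 1 3 3 = 0 := by
  rw [eps4_eq]; exact_mod_cast (by decide : epsZ 1 1 3 3 = 0)
@[simp] private lemma epsV_1_2_0_0 : eps4 1 2 0 0 = 0 := by
  rw [eps4_eq]; exact_mod_cast (by decide : epsZ 1 2 0 0 = 0)
@[simp] private lemma epsV_1_2_0_1 : eps4 1 2 0 1 = 0 := by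
  rw [eps4_eq]; exact_mod_cast (by decide : epsZ 1 2 0 1 = 0)
@[simp] private lemma epsV_1_2_0_2 : eps4 1 2 0 2 = 0 := by
  rw [eps4_eq]; exact_mod_cast (by decide : epsZ 1 2 0 2 = 0)
@[simp] private lemma epsV_1_2_0_3 : eps4 1 2 0 3 = 1 := by
  rw [eps4_eq]; exact_mod_cast (by decide : epsZ 1 2 0 3 = 1)
@[simp] private lemma epsV_1_2_1_0 : eps4 1 2 1 0 = 0 := by
  rw [eps4_eq]; exact_mod_cast (by decide : epsZ 1 2 1 0 = 0)
@[simp] private lemma epsV_1_2_1_1 : eps4 1 2 1 1 = 0 := by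
  rw [eps4_eq]; exact_mod_cast (by decide : epsZ 1 2 1 1 = 0)
@[simp] private lemma epsV_1_2_1_2 : eps4 1 2 1 2 = 0 := by
  rw [eps4_eq]; exact_mod_cast (by decide : epsZ 1 2 1 2 = 0)
@[simp] private lemma epsV_1_2_1_3 : eps4 1 2 1 3 = 0 := by
  rw [eps4_eq]; exact_mod_cast (by decide : epsZ 1 2 1 3 = 0)
@[simp] private lemma epsV_1_2_2_0 : eps4 1 2 2 0 = 0 := by
  rw [eps4_eq]; exact_mod_cast (by decide : epsZ 1 2 2 0 = 0)
@[simp] private lemma epsV_1_2_2_1 : eps4 1 2 2 1 = 0 := by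
  rw [eps4_eq]; exact_mod_cast (by decide : epsZ 1 2 2 1 = 0)
@[simp] private lemma epsV_1_2_2_2 : eps4 1 2 2 2 = 0 := by
  rw [eps4_eq]; exact_mod_cast (by decide : epsZ 1 2 2 2 = 0)
@[simp] private lemma epsV_1_2_2_3 : eps4 1 2 2 3 = 0 := by
  rw [eps4_eq]; exact_mod_cast (by decide : epsZ 1 2 2 3 = 0)
@[simp] private lemma epsV_1_2_3_0 : eps4 1 2 3 0 = (-1) := by
  rw [eps4_eq]; exact_mod_cast (by decide : epsZ 1 2 3 0 = (-1))
@[simp] private lemma epsV_1_2_3_1 : eps4 1 2 3 1 = 0 := by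
  rw [eps4_eq]; exact_mod_cast (by decide : epsZ 1 2 3 1 = 0)
@[simp] private lemma epsV_1_2_3_2 : eps4 1 2 3 2 = 0 := by
  rw [eps4_eq]; exact_mod_cast (by decide : epsZ 1 2 3 2 = 0)
@[simp] private lemma epsV_1_2_3_3 : eps4 1 2 3 3 = 0 := by
  rw [eps4_eq]; exact_mod_cast (by decide : epsZ 1 2 3 3 = 0)
@[simp] private lemma epsV_1_3_0_0 : eps4 1 3 0 0 = 0 := by
  rw [eps4_eq]; exact_mod_cast (by decide : epsZ 1 3 0 0 = 0)
@[simp] private lemma epsV_1_3_0_1 : eps4 1 3 0 1 = 0 := by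
  rw [eps4_eq]; exact_mod_cast (by decide : epsZ 1 3 0 1 = 0)
@[simp] private lemma epsV_1_3_0_2 : eps4 1 3 0 2 = (-1) := by
  rw [eps4_eq]; exact_mod_cast (by decide : epsZ 1 3 0 2 = (-1))
@[simp] private lemma epsV_1_3_0_3 : eps4 1 3 0 3 = 0 := by
  rw [eps4_eq]; exact_mod_cast (by decide : epsZ 1 3 0 3 = 0)
@[simp] private lemma epsV_1_3_1_0 : eps4 1 3 1 0 = 0 := by
  rw [eps4_eq]; exact_mod_cast (by decide : epsZ 1 3 1 0 = 0)
@[simp] private lemma epsV_1_3_1_1 : eps4 1 3 1 1 = 0 := by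
  rw [eps4_eq]; exact_mod_cast (by decide : epsZ 1 3 1 1 = 0)
@[simp] private lemma epsV_1_3_1_2 : eps4 1 3 1 2 = 0 := by
  rw [eps4_eq]; exact_mod_cast (by decide : epsZ 1 3 1 2 = 0)
@[simp] private lemma epsV_1_3_1_3 : eps4 1 3 1 3 = 0 := by
  rw [eps4_eq]; exact_mod_cast (by decide : epsZ 1 3 1 3 = 0)
@[simp] private lemma epsV_1_3_2_0 : eps4 1 3 2 0 = 1 := by
  rw [eps4_eq]; exact_mod_cast (by decide : epsZ 1 3 2 0 = 1)
@[simp] private lemma epsV_1_3_2_1 : eps4 1 3 2 1 = 0 := by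
  rw [eps4_eq]; exact_mod_cast (by decide : epsZ 1 3 2 1 = 0)
@[simp] private lemma epsV_1_3_2_2 : eps4 1 3 2 2 = 0 := by
  rw [eps4_eq]; exact_mod_cast (by decide : epsZ 1 3 2 2 = 0)
@[simp] private lemma epsV_1_3_2_3 : eps4 1 3 2 3 = 0 := by
  rw [eps4_eq]; exact_mod_cast (by decide : epsZ 1 3 2 3 = 0)
@[simp] private lemma epsV_1_3_3_0 : eps4 1 3 3 0 = 0 := by
  rw [eps4_eq]; exact_mod_cast (by decide : epsZ 1 3 3 0 = 0)
@[simp] private lemma epsV_1_3_3_1 : eps4 1 3 3 1 = 0 := by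
  rw [eps4_eq]; exact_mod_cast (by decide : epsZ 1 3 3 1 = 0)
@[simp] private lemma epsV_1_3_3_2 : eps4 1 3 3 2 = 0 := by
  rw [eps4_eq]; exact_mod_cast (by decide : epsZ 1 3 3 2 = 0)
@[simp] private lemma epsV_1_3_3_3 : eps4 1 3 3 3 = 0 := by
  rw [eps4_eq]; exact_mod_cast (by decide : epsZ 1 3 3 3 = 0)
@[simp] private lemma epsV_2_0_0_0 : eps4 2 0 0 0 = 0 := by
  rw [eps4_eq]; exact_mod_cast (by decide : epsZ 2 0 0 0 = 0)
@[simp] private lemma epsV_2_0_0_1 : eps4 2 0 0 1 = 0 := by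
  rw [eps4_eq]; exact_mod_cast (by decide : epsZ 2 0 0 1 = 0)
@[simp] private lemma epsV_2_0_0_2 : eps4 2 0 0 2 = 0 := by
  rw [eps4_eq]; exact_mod_cast (by decide : epsZ 2 0 0 2 = 0)
@[simp] private lemma epsV_2_0_0_3 : eps4 2 0 0 3 = 0 := by
  rw [eps4_eq]; exact_mod_cast (by decide : epsZ 2 0 0 3 = 0)
@[simp] private lemma epsV_2_0_1_0 : eps4 2 0 1 0 = 0 := by
  rw [eps4_eq]; exact_mod_cast (by decide : epsZ 2 0 1 0 = 0)
@[simp] private lemma epsV_2_0_1_1 : eps4 2 0 1 1 = 0 := by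
  rw [eps4_eq]; exact_mod_cast (by decide : epsZ 2 0 1 1 = 0)
@[simp] private lemma epsV_2_0_1_2 : eps4 2 0 1 2 = 0 := by
  rw [eps4_eq]; exact_mod_cast (by decide : epsZ 2 0 1 2 = 0)
@[simp] private lemma epsV_2_0_1_3 : eps4 2 0 1 3 = 1 := by
  rw [eps4_eq]; exact_mod_cast (by decide : epsZ 2 0 1 3 = 1)
@[simp] private lemma epsV_2_0_2_0 : eps4 2 0 2 0 = 0 := by
  rw [eps4_eq]; exact_mod_cast (by decide : epsZ 2 0 2 0 = 0)
@[simp] private lemma epsV_2_0_2_1 : eps4 2 0 2 1 = 0 := by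
  rw [eps4_eq]; exact_mod_cast (by decide : epsZ 2 0 2 1 = 0)
@[simp] private lemma epsV_2_0_2_2 : eps4 2 0 2 2 = 0 := by
  rw [eps4_eq]; exact_mod_cast (by decide : epsZ 2 0 2 2 = 0)
@[simp] private lemma epsV_2_0_2_3 : eps4 2 0 2 3 = 0 := by
  rw [eps4_eq]; exact_mod_cast (by decide : epsZ 2 0 2 3 = 0)
@[simp] private lemma epsV_2_0_3_0 : eps4 2 0 3 0 = 0 := by
  rw [eps4_eq]; exact_mod_cast (by decide : epsZ 2 0 3 0 = 0)
@[simp] private lemma epsV_2_0_3_1 : eps4 2 0 3 1 = (-1) := by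
  rw [eps4_eq]; exact_mod_cast (by decide : epsZ 2 0 3 1 = (-1))
@[simp] private lemma epsV_2_0_3_2 : eps4 2 0 3 2 = 0 := by
  rw [eps4_eq]; exact_mod_cast (by decide : epsZ 2 0 3 2 = 0)
@[simp] private lemma epsV_2_0_3_3 : eps4 2 0 3 3 = 0 := by
  rw [eps4_eq]; exact_mod_cast (by decide : epsZ 2 0 3 3 = 0)
@[simp] private lemma epsV_2_1_0_0 : eps4 2 1 0 0 = 0 := by
  rw [eps4_eq]; exact_mod_cast (by decide : epsZ 2 1 0 0 = 0)
@[simp] private lemma epsV_2_1_0_1 : eps4 2 1 0 1 = 0 := by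
  rw [eps4_eq]; exact_mod_cast (by decide : epsZ 2 1 0 1 = 0)
@[simp] private lemma epsV_2_1_0_2 : eps4 2 1 0 2 = 0 := by
  rw [eps4_eq]; exact_mod_cast (by decide : epsZ 2 1 0 2 = 0)
@[simp] private lemma epsV_2_1_0_3 : eps4 2 1 0 3 = (-1) := by
  rw [eps4_eq]; exact_mod_cast (by decide : epsZ 2 1 0 3 = (-1))
@[simp] private lemma epsV_2_1_1_0 : eps4 2 1 1 0 = 0 := by
  rw [eps4_eq]; exact_mod_cast (by decide : epsZ 2 1 1 0 = 0)
@[simp] private lemma epsV_2_1_1_1 : eps4 2 1 1 1 = 0 := by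
  rw [eps4_eq]; exact_mod_cast (by decide : epsZ 2 1 1 1 = 0)
@[simp] private lemma epsV_2_1_1_2 : eps4 2 1 1 2 = 0 := by
  rw [eps4_eq]; exact_mod_cast (by decide : epsZ 2 1 1 2 = 0)
@[simp] private lemma epsV_2_1_1_3 : eps4 2 1 1 3 = 0 := by
  rw [eps4_eq]; exact_mod_cast (by decide : epsZ 2 1 1 3 = 0)
@[simp] private lemma epsV_2_1_2_0 : eps4 2 1 2 0 = 0 := by
  rw [eps4_eq]; exact_mod_cast (by decide : epsZ 2 1 2 0 = 0)
@[simp] private lemma epsV_2_1_2_1 : eps4 2 1 2 1 = 0 := by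
  rw [eps4_eq]; exact_mod_cast (by decide : epsZ 2 1 2 1 = 0)
@[simp] private lemma epsV_2_1_2_2 : eps4 2 1 2 2 = 0 := by
  rw [eps4_eq]; exact_mod_cast (by decide : epsZ 2 1 2 2 = 0)
@[simp] private lemma epsV_2_1_2_3 : eps4 2 1 2 3 = 0 := by
  rw [eps4_eq]; exact_mod_cast (by decide : epsZ 2 1 2 3 = 0)
@[simp] private lemma epsV_2_1_3_0 : eps4 2 1 3 0 = 1 := by
  rw [eps4_eq]; exact_mod_cast (by decide : epsZ 2 1 3 0 = 1)
@[simp] private lemma epsV_2_1_3_1 : eps4 2 1 3 1 = 0 := by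
  rw [eps4_eq]; exact_mod_cast (by decide : epsZ 2 1 3 1 = 0)
@[simp] private lemma epsV_2_1_3_2 : eps4 2 1 3 2 = 0 := by
  rw [eps4_eq]; exact_mod_cast (by decide : epsZ 2 1 3 2 = 0)
@[simp] private lemma epsV_2_1_3_3 : eps4 2 1 3 3 = 0 := by
  rw [eps4_eq]; exact_mod_cast (by decide : epsZ 2 1 3 3 = 0)
@[simp] private lemma epsV_2_2_0_0 : eps4 2 2 0 0 = 0 := by
  rw [eps4_eq]; exact_mod_cast (by decide : epsZ 2 2 0 0 = 0)
@[simp] private lemma epsV_2_2_0_1 : eps4 2 2 0 1 = 0 := by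
  rw [eps4_eq]; exact_mod_cast (by decide : epsZ 2 2 0 1 = 0)
@[simp] private lemma epsV_2_2_0_2 : eps4 2 2 0 2 = 0 := by
  rw [eps4_eq]; exact_mod_cast (by decide : epsZ 2 2 0 2 = 0)
@[simp] private lemma epsV_2_2_0_3 : eps4 2 2 0 3 = 0 := by
  rw [eps4_eq]; exact_mod_cast (by decide : epsZ 2 2 0 3 = 0)
@[simp] private lemma epsV_2_2_1_0 : eps4 2 2 1 0 = 0 := by
  rw [eps4_eq]; exact_mod_cast (by decide : epsZ 2 2 1 0 = 0)
@[simp] private lemma epsV_2_2_1_1 : eps4 2 2 1 1 = 0 := by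
  rw [eps4_eq]; exact_mod_cast (by decide : epsZ 2 2 1 1 = 0)
@[simp] private lemma epsV_2_2_1_2 : eps4 2 2 1 2 = 0 := by
  rw [eps4_eq]; exact_mod_cast (by decide : epsZ 2 2 1 2 = 0)
@[simp] private lemma epsV_2_2_1_3 : eps4 2 2 1 3 = 0 := by
  rw [eps4_eq]; exact_mod_cast (by decide : epsZ 2 2 1 3 = 0)
@[simp] private lemma epsV_2_2_2_0 : eps4 2 2 2 0 = 0 := by
  rw [eps4_eq]; exact_mod_cast (by decide : epsZ 2 2 2 0 = 0)
@[simp] private lemma epsV_2_2_2_1 : eps4 2 2 2 1 = 0 := by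
  rw [eps4_eq]; exact_mod_cast (by decide : epsZ 2 2 2 1 = 0)
@[simp] private lemma epsV_2_2_2_2 : eps4 2 2 2 2 = 0 := by
  rw [eps4_eq]; exact_mod_cast (by decide : epsZ 2 2 2 2 = 0)
@[simp] private lemma epsV_2_2_2_3 : eps4 2 2 2 3 = 0 := by
  rw [eps4_eq]; exact_mod_cast (by decide : epsZ 2 2 2 3 = 0)
@[simp] private lemma epsV_2_2_3_0 : eps4 2 2 3 0 = 0 := by
  rw [eps4_eq]; exact_mod_cast (by decide : epsZ 2 2 3 0 = 0)
@[simp] private lemma epsV_2_2_3_1 : eps4 2 2 3 1 = 0 := by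
  rw [eps4_eq]; exact_mod_cast (by decide : epsZ 2 2 3 1 = 0)
@[simp] private lemma epsV_2_2_3_2 : eps4 2 2 3 2 = 0 := by
  rw [eps4_eq]; exact_mod_cast (by decide : epsZ 2 2 3 2 = 0)
@[simp] private lemma epsV_2_2_3_3 : eps4 2 2 3 3 = 0 := by
  rw [eps4_eq]; exact_mod_cast (by decide : epsZ 2 2 3 3 = 0)
@[simp] private lemma epsV_2_3_0_0 : eps4 2 3 0 0 = 0 := by
  rw [eps4_eq]; exact_mod_cast (by decide : epsZ 2 3 0 0 = 0)
@[simp] private lemma epsV_2_3_0_1 : eps4 2 3 0 1 = 1 := by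
  rw [eps4_eq]; exact_mod_cast (by decide : epsZ 2 3 0 1 = 1)
@[simp] private lemma epsV_2_3_0_2 : eps4 2 3 0 2 = 0 := by
  rw [eps4_eq]; exact_mod_cast (by decide : epsZ 2 3 0 2 = 0)
@[simp] private lemma epsV_2_3_0_3 : eps4 2 3 0 3 = 0 := by
  rw [eps4_eq]; exact_mod_cast (by decide : epsZ 2 3 0 3 = 0)
@[simp] private lemma epsV_2_3_1_0 : eps4 2 3 1 0 = (-1) := by
  rw [eps4_eq]; exact_mod_cast (by decide : epsZ 2 3 1 0 = (-1))
@[simp] private lemma epsV_2_3_1_1 : eps4 2 3 1 1 = 0 := by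
  rw [eps4_eq]; exact_mod_cast (by decide : epsZ 2 3 1 1 = 0)
@[simp] private lemma epsV_2_3_1_2 : eps4 2 3 1 2 = 0 := by
  rw [eps4_eq]; exact_mod_cast (by decide : epsZ 2 3 1 2 = 0)
@[simp] private lemma epsV_2_3_1_3 : eps4 2 3 1 3 = 0 := by
  rw [eps4_eq]; exact_mod_cast (by decide : epsZ 2 3 1 3 = 0)
@[simp] private lemma epsV_2_3_2_0 : eps4 2 3 2 0 = 0 := by
  rw [eps4_eq]; exact_mod_cast (by decide : epsZ 2 3 2 0 = 0)
@[simp] private lemma epsV_2_3_2_1 : eps4 2 3 2 1 = 0 := by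
  rw [eps4_eq]; exact_mod_cast (by decide : epsZ 2 3 2 1 = 0)
@[simp] private lemma epsV_2_3_2_2 : eps4 2 3 2 2 = 0 := by
  rw [eps4_eq]; exact_mod_cast (by decide : epsZ 2 3 2 2 = 0)
@[simp] private lemma epsV_2_3_2_3 : eps4 2 3 2 3 = 0 := by
  rw [eps4_eq]; exact_mod_cast (by decide : epsZ 2 3 2 3 = 0)
@[simp] private lemma epsV_2_3_3_0 : eps4 2 3 3 0 = 0 := by
  rw [eps4_eq]; exact_mod_cast (by decide : epsZ 2 3 3 0 = 0)
@[simp] private lemma epsV_2_3_3_1 : eps4 2 3 3 1 = 0 := by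
  rw [eps4_eq]; exact_mod_cast (by decide : epsZ 2 3 3 1 = 0)
@[simp] private lemma epsV_2_3_3_2 : eps4 2 3 3 2 = 0 := by
  rw [eps4_eq]; exact_mod_cast (by decide : epsZ 2 3 3 2 = 0)
@[simp] private lemma epsV_2_3_3_3 : eps4 2 3 3 3 = 0 := by
  rw [eps4_eq]; exact_mod_cast (by decide : epsZ 2 3 3 3 = 0)
@[simp] private lemma epsV_3_0_0_0 : eps4 3 0 0 0 = 0 := by
  rw [eps4_eq]; exact_mod_cast (by decide : epsZ 3 0 0 0 = 0)
@[simp] private lemma epsV_3_0_0_1 : eps4 3 0 0 1 = 0 := by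
  rw [eps4_eq]; exact_mod_cast (by decide : epsZ 3 0 0 1 = 0)
@[simp] private lemma epsV_3_0_0_2 : eps4 3 0 0 2 = 0 := by
  rw [eps4_eq]; exact_mod_cast (by decide : epsZ 3 0 0 2 = 0)
@[simp] private lemma epsV_3_0_0_3 : eps4 3 0 0 3 = 0 := by
  rw [eps4_eq]; exact_mod_cast (by decide : epsZ 3 0 0 3 = 0)
@[simp] private lemma epsV_3_0_1_0 : eps4 3 0 1 0 = 0 := by
  rw [eps4_eq]; exact_mod_cast (by decide : epsZ 3 0 1 0 = 0)
@[simp] private lemma epsV_3_0_1_1 : eps4 3 0 1 1 = 0 := by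
  rw [eps4_eq]; exact_mod_cast (by decide : epsZ 3 0 1 1 = 0)
@[simp] private lemma epsV_3_0_1_2 : eps4 3 0 1 2 = (-1) := by
  rw [eps4_eq]; exact_mod_cast (by decide : epsZ 3 0 1 2 = (-1))
@[simp] private lemma epsV_3_0_1_3 : eps4 3 0 1 3 = 0 := by
  rw [eps4_eq]; exact_mod_cast (by decide : epsZ 3 0 1 3 = 0)
@[simp] private lemma epsV_3_0_2_0 : eps4 3 0 2 0 = 0 := by
  rw [eps4_eq]; exact_mod_cast (by decide : epsZ 3 0 2 0 = 0)
@[simp] private lemma epsV_3_0_2_1 : eps4 3 0 2 1 = 1 := by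
  rw [eps4_eq]; exact_mod_cast (by decide : epsZ 3 0 2 1 = 1)
@[simp] private lemma epsV_3_0_2_2 : eps4 3 0 2 2 = 0 := by
  rw [eps4_eq]; exact_mod_cast (by decide : epsZ 3 0 2 2 = 0)
@[simp] private lemma epsV_3_0_2_3 : eps4 3 0 2 3 = 0 := by
  rw [eps4_eq]; exact_mod_cast (by decide : epsZ 3 0 2 3 = 0)
@[simp] private lemma epsV_3_0_3_0 : eps4 3 0 3 0 = 0 := by
  rw [eps4_eq]; exact_mod_cast (by decide : epsZ 3 0 3 0 = 0)
@[simp] private lemma epsV_3_0_3_1 : eps4 3 0 3 1 = 0 := by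
  rw [eps4_eq]; exact_mod_cast (by decide : epsZ 3 0 3 1 = 0)
@[simp] private lemma epsV_3_0_3_2 : eps4 3 0 3 2 = 0 := by
  rw [eps4_eq]; exact_mod_cast (by decide : epsZ 3 0 3 2 = 0)
@[simp] private lemma epsV_3_0_3_3 : eps4 3 0 3 3 = 0 := by
  rw [eps4_eq]; exact_mod_cast (by decide : epsZ 3 0 3 3 = 0)
@[simp] private lemma epsV_3_1_0_0 : eps4 3 1 0 0 = 0 := by
  rw [eps4_eq]; exact_mod_cast (by decide : epsZ 3 1 0 0 = 0)
@[simp] private lemma epsV_3_1_0_1 : eps4 3 1 0 1 = 0 := by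
  rw [eps4_eq]; exact_mod_cast (by decide : epsZ 3 1 0 1 = 0)
@[simp] private lemma epsV_3_1_0_2 : eps4 3 1 0 2 = 1 := by
  rw [eps4_eq]; exact_mod_cast (by decide : epsZ 3 1 0 2 = 1)
@[simp] private lemma epsV_3_1_0_3 : eps4 3 1 0 3 = 0 := by
  rw [eps4_eq]; exact_mod_cast (by decide : epsZ 3 1 0 3 = 0)
@[simp] private lemma epsV_3_1_1_0 : eps4 3 1 1 0 = 0 := by
  rw [eps4_eq]; exact_mod_cast (by decide : epsZ 3 1 1 0 = 0)
@[simp] private lemma epsV_3_1_1_1 : eps4 3 1 1 1 = 0 := by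
  rw [eps4_eq]; exact_mod_cast (by decide : epsZ 3 1 1 1 = 0)
@[simp] private lemma epsV_3_1_1_2 : eps4 3 1 1 2 = 0 := by
  rw [eps4_eq]; exact_mod_cast (by decide : epsZ 3 1 1 2 = 0)
@[simp] private lemma epsV_3_1_1_3 : eps4 3 1 1 3 = 0 := by
  rw [eps4_eq]; exact_mod_cast (by decide : epsZ 3 1 1 3 = 0)
@[simp] private lemma epsV_3_1_2_0 : eps4 3 1 2 0 = (-1) := by
  rw [eps4_eq]; exact_mod_cast (by decide : epsZ 3 1 2 0 = (-1))
@[simp] private lemma epsV_3_1_2_1 : eps4 3 1 2 1 = 0 := by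
  rw [eps4_eq]; exact_mod_cast (by decide : epsZ 3 1 2 1 = 0)
@[simp] private lemma epsV_3_1_2_2 : eps4 3 1 2 2 = 0 := by
  rw [eps4_eq]; exact_mod_cast (by decide : epsZ 3 1 2 2 = 0)
@[simp] private lemma epsV_3_1_2_3 : eps4 3 1 2 3 = 0 := by
  rw [eps4_eq]; exact_mod_cast (by decide : epsZ 3 1 2 3 = 0)
@[simp] private lemma epsV_3_1_3_0 : eps4 3 1 3 0 = 0 := by
  rw [eps4_eq]; exact_mod_cast (by decide : epsZ 3 1 3 0 = 0)
@[simp] private lemma epsV_3_1_3_1 : eps4 3 1 3 1 = 0 := by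
  rw [eps4_eq]; exact_mod_cast (by decide : epsZ 3 1 3 1 = 0)
@[simp] private lemma epsV_3_1_3_2 : eps4 3 1 3 2 = 0 := by
  rw [eps4_eq]; exact_mod_cast (by decide : epsZ 3 1 3 2 = 0)
@[simp] private lemma epsV_3_1_3_3 : eps4 3 1 3 3 = 0 := by
  rw [eps4_eq]; exact_mod_cast (by decide : epsZ 3 1 3 3 = 0)
@[simp] private lemma epsV_3_2_0_0 : eps4 3 2 0 0 = 0 := by
  rw [eps4_eq]; exact_mod_cast (by decide : epsZ 3 2 0 0 = 0)
@[simp] private lemma epsV_3_2_0_1 : eps4 3 2 0 1 = (-1) := by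
  rw [eps4_eq]; exact_mod_cast (by decide : epsZ 3 2 0 1 = (-1))
@[simp] private lemma epsV_3_2_0_2 : eps4 3 2 0 2 = 0 := by
  rw [eps4_eq]; exact_mod_cast (by decide : epsZ 3 2 0 2 = 0)
@[simp] private lemma epsV_3_2_0_3 : eps4 3 2 0 3 = 0 := by
  rw [eps4_eq]; exact_mod_cast (by decide : epsZ 3 2 0 3 = 0)
@[simp] private lemma epsV_3_2_1_0 : eps4 3 2 1 0 = 1 := by
  rw [eps4_eq]; exact_mod_cast (by decide : epsZ 3 2 1 0 = 1)
@[simp] private lemma epsV_3_2_1_1 : eps4 3 2 1 1 = 0 := by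
  rw [eps4_eq]; exact_mod_cast (by decide : epsZ 3 2 1 1 = 0)
@[simp] private lemma epsV_3_2_1_2 : eps4 3 2 1 2 = 0 := by
  rw [eps4_eq]; exact_mod_cast (by decide : epsZ 3 2 1 2 = 0)
@[simp] private lemma epsV_3_2_1_3 : eps4 3 2 1 3 = 0 := by
  rw [eps4_eq]; exact_mod_cast (by decide : epsZ 3 2 1 3 = 0)
@[simp] private lemma epsV_3_2_2_0 : eps4 3 2 2 0 = 0 := by
  rw [eps4_eq]; exact_mod_cast (by decide : epsZ 3 2 2 0 = 0)
@[simp] private lemma epsV_3_2_2_1 : eps4 3 2 2 1 = 0 := by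
  rw [eps4_eq]; exact_mod_cast (by decide : epsZ 3 2 2 1 = 0)
@[simp] private lemma epsV_3_2_2_2 : eps4 3 2 2 2 = 0 := by
  rw [eps4_eq]; exact_mod_cast (by decide : epsZ 3 2 2 2 = 0)
@[simp] private lemma epsV_3_2_2_3 : eps4 3 2 2 3 = 0 := by
  rw [eps4_eq]; exact_mod_cast (by decide : epsZ 3 2 2 3 = 0)
@[simp] private lemma epsV_3_2_3_0 : eps4 3 2 3 0 = 0 := by
  rw [eps4_eq]; exact_mod_cast (by decide : epsZ 3 2 3 0 = 0)
@[simp] private lemma epsV_3_2_3_1 : eps4 3 2 3 1 = 0 := by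
  rw [eps4_eq]; exact_mod_cast (by decide : epsZ 3 2 3 1 = 0)
@[simp] private lemma epsV_3_2_3_2 : eps4 3 2 3 2 = 0 := by
  rw [eps4_eq]; exact_mod_cast (by decide : epsZ 3 2 3 2 = 0)
@[simp] private lemma epsV_3_2_3_3 : eps4 3 2 3 3 = 0 := by
  rw [eps4_eq]; exact_mod_cast (by decide : epsZ 3 2 3 3 = 0)
@[simp] private lemma epsV_3_3_0_0 : eps4 3 3 0 0 = 0 := by
  rw [eps4_eq]; exact_mod_cast (by decide : epsZ 3 3 0 0 = 0)
@[simp] private lemma epsV_3_3_0_1 : eps4 3 3 0 1 = 0 := by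
  rw [eps4_eq]; exact_mod_cast (by decide : epsZ 3 3 0 1 = 0)
@[simp] private lemma epsV_3_3_0_2 : eps4 3 3 0 2 = 0 := by
  rw [eps4_eq]; exact_mod_cast (by decide : epsZ 3 3 0 2 = 0)
@[simp] private lemma epsV_3_3_0_3 : eps4 3 3 0 3 = 0 := by
  rw [eps4_eq]; exact_mod_cast (by decide : epsZ 3 3 0 3 = 0)
@[simp] private lemma epsV_3_3_1_0 : eps4 3 3 1 0 = 0 := by
  rw [eps4_eq]; exact_mod_cast (by decide : epsZ 3 3 1 0 = 0)
@[simp] private lemma epsV_3_3_1_1 : eps4 3 3 1 1 = 0 := by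
  rw [eps4_eq]; exact_mod_cast (by decide : epsZ 3 3 1 1 = 0)
@[simp] private lemma epsV_3_3_1_2 : eps4 3 3 1 2 = 0 := by
  rw [eps4_eq]; exact_mod_cast (by decide : epsZ 3 3 1 2 = 0)
@[simp] private lemma epsV_3_3_1_3 : eps4 3 3 1 3 = 0 := by
  rw [eps4_eq]; exact_mod_cast (by decide : epsZ 3 3 1 3 = 0)
@[simp] private lemma epsV_3_3_2_0 : eps4 3 3 2 0 = 0 := by
  rw [eps4_eq]; exact_mod_cast (by decide : epsZ 3 3 2 0 = 0)
@[simp] private lemma epsV_3_3_2_1 : eps4 3 3 2 1 = 0 := by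
  rw [eps4_eq]; exact_mod_cast (by decide : epsZ 3 3 2 1 = 0)
@[simp] private lemma epsV_3_3_2_2 : eps4 3 3 2 2 = 0 := by
  rw [eps4_eq]; exact_mod_cast (by decide : epsZ 3 3 2 2 = 0)
@[simp] private lemma epsV_3_3_2_3 : eps4 3 3 2 3 = 0 := by
  rw [eps4_eq]; exact_mod_cast (by decide : epsZ 3 3 2 3 = 0)
@[simp] private lemma epsV_3_3_3_0 : eps4 3 3 3 0 = 0 := by
  rw [eps4_eq]; exact_mod_cast (by decide : epsZ 3 3 3 0 = 0)
@[simp] private lemma epsV_3_3_3_1 : eps4 3 3 3 1 = 0 := by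
  rw [eps4_eq]; exact_mod_cast (by decide : epsZ 3 3 3 1 = 0)
@[simp] private lemma epsV_3_3_3_2 : eps4 3 3 3 2 = 0 := by
  rw [eps4_eq]; exact_mod_cast (by decide : epsZ 3 3 3 2 = 0)
@[simp] private lemma epsV_3_3_3_3 : eps4 3 3 3 3 = 0 := by
  rw [eps4_eq]; exact_mod_cast (by decide : epsZ 3 3 3 3 = 0)

private lemma det4_expand (u v s t : Fin 4 → ℝ) :
    Matrix.det (Matrix.of fun i k => ![u, v, s, t] k i)
    = u 0 * (v 1 * (s 2 * t 3 - s 3 * t 2) - v 2 * (s 1 * t 3 - s 3 * t 1) + v 3 * (s 1 * t 2 - s 2 * t 1))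
      - u 1 * (v 0 * (s 2 * t 3 - s 3 * t 2) - v 2 * (s 0 * t 3 - s 3 * t 0) + v 3 * (s 0 * t 2 - s 2 * t 0))
      + u 2 * (v 0 * (s 1 * t 3 - s 3 * t 1) - v 1 * (s 0 * t 3 - s 3 * t 0) + v 3 * (s 0 * t 1 - s 1 * t 0))
      - u 3 * (v 0 * (s 1 * t 2 - s 2 * t 1) - v 1 * (s 0 * t 2 - s 2 * t 0) + v 2 * (s 0 * t 1 - s 1 * t 0)) := by
  have h : (Matrix.of fun i k => ![u, v, s, t] k i) = Matrix.transpose (Matrix.of ![u, v, s, t]) := by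
    ext i k
    rfl
  rw [h, Matrix.det_transpose, Matrix.det_succ_row_zero]
  simp [Fin.sum_univ_succ, Matrix.det_fin_three,
    show (Fin.succ 2 : Fin 4) = 3 from rfl,
    show ((3 : Fin 4)).succAbove 2 = 2 from rfl,
    show ((1 : Fin 4)).succAbove 2 = 3 from rfl,
    show ((2 : Fin 4)).succAbove 2 = 3 from rfl,
    show (Fin.castSucc 2 : Fin 4) = 2 from rfl]
  ring

private lemma det_col (u v s t : Fin 4 → ℝ) :
    ∑ w, ∑ x, ∑ y, ∑ z, eps4 w x y z * (u w * v x * s y * t z)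
      = Matrix.det (Matrix.of fun i k => ![u, v, s, t] k i) := by
  rw [det4_expand]
  simp only [Fin.sum_univ_four]
  simp
  ring

private lemma det_mul_eps (g : Fin 4 → Fin 4 → ℝ) (α β γ δ : Fin 4) :
    ∑ w, ∑ x, ∑ y, ∑ z, eps4 w x y z * (g w α * g x β * g y γ * g z δ)
      = (Matrix.of g).det * eps4 α β γ δ := by
  have h1 := det_col (fun w => g w α) (fun w => g w β) (fun w => g w γ) (fun w => g w δ)
  rw [h1]
  have h2 : (Matrix.of fun i k => ![(fun w => g w α), (fun w => g w β), (fun w => g w γ), (fun w => g w δ)] k i)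
      = Matrix.of g * Matrix.of (fun k κ => if k = ![α, β, γ, δ] κ then (1:ℝ) else 0) := by
    ext i κ
    fin_cases κ <;>
      simp only [Matrix.mul_apply, Matrix.of_apply, mul_boole, Finset.sum_ite_eq', Finset.mem_univ, if_true] <;> rfl
  rw [h2, Matrix.det_mul]
  congr 1
  have h3 : Matrix.of (fun k κ => if k = ![α, β, γ, δ] κ then (1:ℝ) else 0)
      = Matrix.of fun i k => ![(fun w => if w = α then (1:ℝ) else 0), (fun w => if w = β then (1:ℝ) else 0),
          (fun w => if w = γ then (1:ℝ) else 0), (fun w => if w = δ then (1:ℝ) else 0)] k i := by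
    ext i κ
    fin_cases κ <;> rfl
  rw [h3, ← det_col]
  simp [ite_mul, mul_ite, mul_one, mul_zero, one_mul, zero_mul, Finset.sum_ite_eq]
-- ===== Block 2 =====
private lemma NM_one (g ginv : Fin 4 → Fin 4 → ℝ)
    (hginv : ∀ a b, ∑ c, ginv a c * g c b = if a = b then (1 : ℝ) else 0) :
    Matrix.of ginv * Matrix.of g = 1 := by
  ext a b
  simp [Matrix.mul_apply, Matrix.one_apply, hginv a b]

private lemma L_gg2 (g ginv : Fin 4 → Fin 4 → ℝ)
    (hginv : ∀ a b, ∑ c, ginv a c * g c b = if a = b then (1 : ℝ) else 0) :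
    ∀ a b, ∑ c, g a c * ginv c b = if a = b then (1 : ℝ) else 0 := by
  intro a b
  have h := mul_eq_one_comm.mp (NM_one g ginv hginv)
  have := congrFun (congrFun h a) b
  simpa [Matrix.mul_apply, Matrix.one_apply] using this

private lemma L_Gsym (g ginv : Fin 4 → Fin 4 → ℝ)
    (hg : ∀ a b, g a b = g b a)
    (hginv : ∀ a b, ∑ c, ginv a c * g c b = if a = b then (1 : ℝ) else 0) :
    ∀ a b, ginv a b = ginv b a := by
  have hNM := NM_one g ginv hginv
  have hN : Matrix.of ginv = (Matrix.of g)⁻¹ := (Matrix.inv_eq_left_inv hNM).symm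
  have hgT : Matrix.transpose (Matrix.of g) = Matrix.of g := by
    ext i k; exact hg k i
  have h2 : Matrix.transpose (Matrix.of ginv) = Matrix.of ginv := by
    rw [hN, Matrix.transpose_nonsing_inv, hgT]
  intro a b
  have h3 := congrFun (congrFun h2 b) a
  simpa [Matrix.transpose_apply] using h3

private lemma L_gG (g ginv : Fin 4 → Fin 4 → ℝ)
    (hg : ∀ a b, g a b = g b a)
    (hginv : ∀ a b, ∑ c, ginv a c * g c b = if a = b then (1 : ℝ) else 0)
    (p w : Fin 4) : ∑ α, ginv p α * g w α = if p = w then (1:ℝ) else 0 := by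
  rw [← hginv p w]
  exact Finset.sum_congr rfl fun α _ => by rw [hg w α]

private lemma L_Gg (g ginv : Fin 4 → Fin 4 → ℝ)
    (hg : ∀ a b, g a b = g b a)
    (hginv : ∀ a b, ∑ c, ginv a c * g c b = if a = b then (1 : ℝ) else 0)
    (γ d : Fin 4) : ∑ r, g r d * ginv r γ = if γ = d then (1:ℝ) else 0 := by
  rw [← hginv γ d]
  exact Finset.sum_congr rfl fun r _ => by
    rw [L_Gsym g ginv hg hginv r γ]; ring

private lemma L_gG2 (g ginv : Fin 4 → Fin 4 → ℝ)
    (hg : ∀ a b, g a b = g b a)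
    (hginv : ∀ a b, ∑ c, ginv a c * g c b = if a = b then (1 : ℝ) else 0)
    (x σ : Fin 4) : ∑ γ, g x γ * ginv γ σ = if σ = x then (1:ℝ) else 0 := by
  rw [← hginv σ x]
  exact Finset.sum_congr rfl fun γ _ => by
    rw [L_Gsym g ginv hg hginv γ σ, hg x γ]; ring

private noncomputable def Xc (ginv : Fin 4 → Fin 4 → ℝ) (j p β γ : Fin 4) : ℝ :=
  ∑ α, ginv p α * eps4 α β γ j

private noncomputable def XL (g : Fin 4 → Fin 4 → ℝ) (j p β γ : Fin 4) : ℝ :=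
  ∑ x, ∑ y, ∑ z, eps4 p x y z * (g x β * g y γ * g z j)

private noncomputable def Yc (ginv : Fin 4 → Fin 4 → ℝ) (a p μ ν : Fin 4) : ℝ :=
  ∑ m, ∑ n, ginv μ m * ginv ν n * eps4 a p m n

private noncomputable def BB (g : Fin 4 → Fin 4 → ℝ) (a j β γ μ ν : Fin 4) : ℝ :=
  g a β * (dl μ γ * dl ν j - dl μ j * dl ν γ)
    - g a γ * (dl μ β * dl ν j - dl μ j * dl ν β)
    + g a j * (dl μ β * dl ν γ - dl μ γ * dl ν β)

private lemma sum_dl_mul (t : Fin 4) (u : Fin 4 → ℝ) : ∑ x, dl t x * u x = u t := by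
  simp [dl, ite_mul, one_mul, zero_mul, Finset.sum_ite_eq]

private lemma gencol (t1 t2 t3 : Fin 4) (u v w : Fin 4 → ℝ) :
    ∑ x, ∑ y, ∑ z, (dl t1 x * dl t2 y * dl t3 z) * (u x * v y * w z)
      = u t1 * v t2 * w t3 := by
  have h : ∑ x, ∑ y, ∑ z, (dl t1 x * dl t2 y * dl t3 z) * (u x * v y * w z)
      = (∑ x, dl t1 x * u x) * ((∑ y, dl t2 y * v y) * (∑ z, dl t3 z * w z)) := by
    simp only [Fin.sum_univ_four]
    ring
  rw [h, sum_dl_mul, sum_dl_mul, sum_dl_mul]; ring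

private lemma G2' (q C : Fin 4 → ℝ) (h : Fin 4 → Fin 4 → ℝ) :
    ∑ α, q α * (∑ w, h α w * C w) = ∑ w, (∑ α, q α * h α w) * C w := by
  have h1 : ∑ α, q α * (∑ w, h α w * C w) = ∑ α, ∑ w, q α * (h α w * C w) := by
    exact Finset.sum_congr rfl fun α _ => Finset.mul_sum _ _ _
  rw [h1, Finset.sum_comm]
  exact Finset.sum_congr rfl fun w _ => by
    rw [Finset.sum_mul]
    exact Finset.sum_congr rfl fun α _ => by ring

private lemma swap2 (f : Fin 4 → Fin 4 → ℝ) :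
    ∑ p, ∑ m, f p m = ∑ m, ∑ p, f p m := Finset.sum_comm

private lemma swap3 (f : Fin 4 → Fin 4 → Fin 4 → ℝ) :
    ∑ p, ∑ m, ∑ n, f p m n = ∑ m, ∑ n, ∑ p, f p m n := by
  rw [Finset.sum_comm]
  exact Finset.sum_congr rfl fun m _ => Finset.sum_comm

private lemma swap4 (f : Fin 4 → Fin 4 → Fin 4 → Fin 4 → ℝ) :
    ∑ p, ∑ x, ∑ y, ∑ z, f p x y z = ∑ x, ∑ y, ∑ z, ∑ p, f p x y z := by
  rw [Finset.sum_comm]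
  exact Finset.sum_congr rfl fun x _ => swap3 fun p y z => f p x y z

private lemma L1' (g ginv : Fin 4 → Fin 4 → ℝ)
    (hg : ∀ a b, g a b = g b a)
    (hginv : ∀ a b, ∑ c, ginv a c * g c b = if a = b then (1 : ℝ) else 0)
    (j p β γ : Fin 4) :
    (Matrix.of g).det * Xc ginv j p β γ = XL g j p β γ := by
  unfold Xc XL
  calc (Matrix.of g).det * ∑ α, ginv p α * eps4 α β γ j
      = ∑ α, ginv p α * ((Matrix.of g).det * eps4 α β γ j) := by
        rw [Finset.mul_sum]; exact Finset.sum_congr rfl fun α _ => by ring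
    _ = ∑ α, ginv p α * (∑ w, ∑ x, ∑ y, ∑ z, eps4 w x y z * (g w α * g x β * g y γ * g z j)) := by
        exact Finset.sum_congr rfl fun α _ => by rw [det_mul_eps]
    _ = ∑ α, ginv p α * (∑ w, g w α * (∑ x, ∑ y, ∑ z, eps4 w x y z * (g x β * g y γ * g z j))) := by
        refine Finset.sum_congr rfl fun α _ => ?_
        congr 1
        refine Finset.sum_congr rfl fun w _ => ?_
        rw [Finset.mul_sum]
        refine Finset.sum_congr rfl fun x _ => ?_
        rw [Finset.mul_sum]
        refine Finset.sum_congr rfl fun y _ => ?_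
        rw [Finset.mul_sum]
        exact Finset.sum_congr rfl fun z _ => by ring
    _ = ∑ w, (∑ α, ginv p α * g w α) * (∑ x, ∑ y, ∑ z, eps4 w x y z * (g x β * g y γ * g z j)) := by
        exact G2' (fun α => ginv p α)
          (fun w => ∑ x, ∑ y, ∑ z, eps4 w x y z * (g x β * g y γ * g z j))
          (fun α w => g w α)
    _ = ∑ w, (if p = w then (1:ℝ) else 0) * (∑ x, ∑ y, ∑ z, eps4 w x y z * (g x β * g y γ * g z j)) := by
        exact Finset.sum_congr rfl fun w _ => by rw [L_gG g ginv hg hginv p w]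
    _ = ∑ x, ∑ y, ∑ z, eps4 p x y z * (g x β * g y γ * g z j) := by
        simp [ite_mul, one_mul, zero_mul, Finset.sum_ite_eq]

private lemma core2a (g ginv : Fin 4 → Fin 4 → ℝ) (a j β γ μ ν : Fin 4) :
    ∑ p, XL g j p β γ * Yc ginv a p μ ν
      = ∑ m, ∑ n, (ginv μ m * ginv ν n) * (∑ p, eps4 a p m n * XL g j p β γ) := by
  unfold Yc
  simp only [Finset.mul_sum]
  rw [swap3 fun p m n => XL g j p β γ * (ginv μ m * ginv ν n * eps4 a p m n)]
  exact Finset.sum_congr rfl fun m _ => Finset.sum_congr rfl fun n _ =>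
    Finset.sum_congr rfl fun p _ => by ring

private lemma core2b (g : Fin 4 → Fin 4 → ℝ) (a j β γ m n : Fin 4) :
    ∑ p, eps4 a p m n * XL g j p β γ
      = ∑ x, ∑ y, ∑ z, (∑ p, eps4 a p m n * eps4 p x y z) * (g x β * g y γ * g z j) := by
  unfold XL
  simp only [Finset.mul_sum, Finset.sum_mul]
  rw [swap4 fun p x y z => eps4 a p m n * (eps4 p x y z * (g x β * g y γ * g z j))]
  exact Finset.sum_congr rfl fun x _ => Finset.sum_congr rfl fun y _ =>
    Finset.sum_congr rfl fun z _ => Finset.sum_congr rfl fun p _ => by ring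

private lemma inner3 (g : Fin 4 → Fin 4 → ℝ) (a j β γ m n : Fin 4) :
    ∑ x, ∑ y, ∑ z, (∑ p, eps4 a p m n * eps4 p x y z) * (g x β * g y γ * g z j)
      = -(g a β * (g m γ * g n j - g m j * g n γ)
          - g a γ * (g m β * g n j - g m j * g n β)
          + g a j * (g m β * g n γ - g m γ * g n β)) := by
  simp only [eps_eps]
  have e : ∀ x y z : Fin 4,
      (-(dl a x * (dl m y * dl n z - dl m z * dl n y)
          - dl a y * (dl m x * dl n z - dl m z * dl n x)
          + dl a z * (dl m x * dl n y - dl m y * dl n x))) * (g x β * g y γ * g z j)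
      = -((dl a x * dl m y * dl n z) * (g x β * g y γ * g z j))
        + (dl a x * dl n y * dl m z) * (g x β * g y γ * g z j)
        + (dl m x * dl a y * dl n z) * (g x β * g y γ * g z j)
        - (dl n x * dl a y * dl m z) * (g x β * g y γ * g z j)
        - (dl m x * dl n y * dl a z) * (g x β * g y γ * g z j)
        + (dl n x * dl m y * dl a z) * (g x β * g y γ * g z j) := by
    intro x y z; ring
  simp only [e]
  simp only [Finset.sum_add_distrib, Finset.sum_sub_distrib, Finset.sum_neg_distrib]
  rw [gencol a m n (fun x => g x β) (fun y => g y γ) (fun z => g z j),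
      gencol a n m (fun x => g x β) (fun y => g y γ) (fun z => g z j),
      gencol m a n (fun x => g x β) (fun y => g y γ) (fun z => g z j),
      gencol n a m (fun x => g x β) (fun y => g y γ) (fun z => g z j),
      gencol m n a (fun x => g x β) (fun y => g y γ) (fun z => g z j),
      gencol n m a (fun x => g x β) (fun y => g y γ) (fun z => g z j)]
  ring

private lemma core3 (g ginv : Fin 4 → Fin 4 → ℝ)
    (hg : ∀ a b, g a b = g b a)
    (hginv : ∀ a b, ∑ c, ginv a c * g c b = if a = b then (1 : ℝ) else 0)
    (a j β γ μ ν : Fin 4) :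
    ∑ m, ∑ n, (ginv μ m * ginv ν n)
        * (-(g a β * (g m γ * g n j - g m j * g n γ)
            - g a γ * (g m β * g n j - g m j * g n β)
            + g a j * (g m β * g n γ - g m γ * g n β)))
      = -(BB g a j β γ μ ν) := by
  have e : ∀ m n : Fin 4, (ginv μ m * ginv ν n)
        * (-(g a β * (g m γ * g n j - g m j * g n γ)
            - g a γ * (g m β * g n j - g m j * g n β)
            + g a j * (g m β * g n γ - g m γ * g n β)))
      = -(g a β * ((ginv μ m * g m γ) * (ginv ν n * g n j)))
        + g a β * ((ginv μ m * g m j) * (ginv ν n * g n γ))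
        + g a γ * ((ginv μ m * g m β) * (ginv ν n * g n j))
        - g a γ * ((ginv μ m * g m j) * (ginv ν n * g n β))
        - g a j * ((ginv μ m * g m β) * (ginv ν n * g n γ))
        + g a j * ((ginv μ m * g m γ) * (ginv ν n * g n β)) := by
    intro m n; ring
  simp only [e]
  simp only [Finset.sum_add_distrib, Finset.sum_sub_distrib, Finset.sum_neg_distrib]
  have fac : ∀ (u v : Fin 4 → ℝ) (C : ℝ),
      ∑ m, ∑ n, C * ((ginv μ m * u m) * (ginv ν n * v n))
        = C * ((∑ m, ginv μ m * u m) * (∑ n, ginv ν n * v n)) := by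
    intro u v C
    simp only [Fin.sum_univ_four]
    ring
  rw [fac (fun m => g m γ) (fun n => g n j), fac (fun m => g m j) (fun n => g n γ),
      fac (fun m => g m β) (fun n => g n j), fac (fun m => g m j) (fun n => g n β),
      fac (fun m => g m β) (fun n => g n γ), fac (fun m => g m γ) (fun n => g n β)]
  simp only [hginv]
  unfold BB dl
  ring

private lemma core (g ginv : Fin 4 → Fin 4 → ℝ)
    (hg : ∀ a b, g a b = g b a)
    (hginv : ∀ a b, ∑ c, ginv a c * g c b = if a = b then (1 : ℝ) else 0)
    (a j β γ μ ν : Fin 4) :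
    (-(Matrix.of g).det) * (∑ p, Xc ginv j p β γ * Yc ginv a p μ ν)
      = BB g a j β γ μ ν := by
  have h1 : (-(Matrix.of g).det) * (∑ p, Xc ginv j p β γ * Yc ginv a p μ ν)
      = -∑ p, ((Matrix.of g).det * Xc ginv j p β γ) * Yc ginv a p μ ν := by
    rw [Finset.mul_sum, ← Finset.sum_neg_distrib]
    exact Finset.sum_congr rfl fun p _ => by ring
  rw [h1]
  have h2 : ∀ p, ((Matrix.of g).det * Xc ginv j p β γ) * Yc ginv a p μ ν
      = XL g j p β γ * Yc ginv a p μ ν := fun p => by rw [L1' g ginv hg hginv]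
  simp only [h2]
  rw [core2a]
  have h3 : ∀ m n : Fin 4, (ginv μ m * ginv ν n) * (∑ p, eps4 a p m n * XL g j p β γ)
      = (ginv μ m * ginv ν n)
        * (-(g a β * (g m γ * g n j - g m j * g n γ)
            - g a γ * (g m β * g n j - g m j * g n β)
            + g a j * (g m β * g n γ - g m γ * g n β))) := fun m n => by
    rw [core2b, inner3]
  simp only [h3]
  rw [core3 g ginv hg hginv, neg_neg]

-- ===== Block 3 =====
private noncomputable def sqf (S ginv : Fin 4 → Fin 4 → ℝ) (e β : Fin 4) : ℝ :=
  ∑ q, S q e * ginv q β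

private noncomputable def CC (g ginv : Fin 4 → Fin 4 → ℝ)
    (W : Fin 4 → Fin 4 → Fin 4 → Fin 4 → ℝ) (b c d e μ ν : Fin 4) : ℝ :=
  -(dl c d) * (∑ σ, ginv e σ * W σ b μ ν)
    - (dl b d) * (∑ σ, ginv e σ * W σ c μ ν)
    + (dl c e) * (∑ σ, ginv d σ * W σ b μ ν)
    + (dl b e) * (∑ σ, ginv d σ * W σ c μ ν)
    + (1/2) * g b c * (∑ σ, ∑ τ, (ginv e σ * ginv d τ - ginv d σ * ginv e τ) * W σ τ μ ν)

private noncomputable def FFc (g ginv S : Fin 4 → Fin 4 → ℝ)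
    (W : Fin 4 → Fin 4 → Fin 4 → Fin 4 → ℝ) (b c β γ μ ν : Fin 4) : ℝ :=
  ∑ e, sqf S ginv e β * CC g ginv W b c γ e μ ν

private lemma W1 (g ginv : Fin 4 → Fin 4 → ℝ)
    (W : Fin 4 → Fin 4 → Fin 4 → Fin 4 → ℝ) (σ τ a p : Fin 4) :
    Wstar g ginv W σ τ a p
      = Real.sqrt (-(Matrix.of g).det) * ((1/2) * ∑ μ, ∑ ν, Yc ginv a p μ ν * W σ τ μ ν) := by
  unfold Wstar eta4 Yc
  simp only [Fin.sum_univ_four]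
  ring

private lemma pullWst (g ginv : Fin 4 → Fin 4 → ℝ)
    (W : Fin 4 → Fin 4 → Fin 4 → Fin 4 → ℝ) (d u a h : Fin 4) :
    ∑ σ, ginv d σ * Wstar g ginv W σ u a h
      = Real.sqrt (-(Matrix.of g).det)
        * ((1/2) * ∑ μ, ∑ ν, Yc ginv a h μ ν * (∑ σ, ginv d σ * W σ u μ ν)) := by
  simp only [W1]
  simp only [Fin.sum_univ_four]
  ring

private lemma pullWst2 (g ginv : Fin 4 → Fin 4 → ℝ)
    (W : Fin 4 → Fin 4 → Fin 4 → Fin 4 → ℝ) (d e a h : Fin 4) :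
    ∑ σ, ∑ τ, ginv d σ * ginv e τ * Wstar g ginv W σ τ a h
      = Real.sqrt (-(Matrix.of g).det)
        * ((1/2) * ∑ μ, ∑ ν, Yc ginv a h μ ν * (∑ σ, ∑ τ, (ginv d σ * ginv e τ) * W σ τ μ ν)) := by
  simp only [W1]
  simp only [Fin.sum_univ_four]
  ring

private lemma splitYc (Y s1 s2 s3 s4 t1 t2 : Fin 4 → Fin 4 → ℝ) (c1 c2 c3 c4 c5 : ℝ) :
    ∑ μ, ∑ ν, Y μ ν * (c1 * s1 μ ν + c2 * s2 μ ν + c3 * s3 μ ν + c4 * s4 μ ν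
        + c5 * (t1 μ ν - t2 μ ν))
      = c1 * (∑ μ, ∑ ν, Y μ ν * s1 μ ν) + c2 * (∑ μ, ∑ ν, Y μ ν * s2 μ ν)
        + c3 * (∑ μ, ∑ ν, Y μ ν * s3 μ ν) + c4 * (∑ μ, ∑ ν, Y μ ν * s4 μ ν)
        + c5 * ((∑ μ, ∑ ν, Y μ ν * t1 μ ν) - (∑ μ, ∑ ν, Y μ ν * t2 μ ν)) := by
  simp only [Fin.sum_univ_four]
  ring

private lemma OmD (g ginv : Fin 4 → Fin 4 → ℝ)
    (W : Fin 4 → Fin 4 → Fin 4 → Fin 4 → ℝ) (a b c p d e : Fin 4) :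
    OmegaC g ginv W e d a b c p - OmegaC g ginv W d e a b c p
      = Real.sqrt (-(Matrix.of g).det)
        * ((1/2) * ∑ μ, ∑ ν, Yc ginv a p μ ν * CC g ginv W b c d e μ ν) := by
  unfold OmegaC
  rw [pullWst g ginv W e b a p, pullWst g ginv W e c a p,
      pullWst g ginv W d b a p, pullWst g ginv W d c a p,
      pullWst2 g ginv W e d a p, pullWst2 g ginv W d e a p]
  have hCC : ∀ μ ν : Fin 4, CC g ginv W b c d e μ ν
      = (-(dl c d)) * (∑ σ, ginv e σ * W σ b μ ν)
        + (-(dl b d)) * (∑ σ, ginv e σ * W σ c μ ν)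
        + dl c e * (∑ σ, ginv d σ * W σ b μ ν)
        + dl b e * (∑ σ, ginv d σ * W σ c μ ν)
        + ((1/2) * g b c)
          * ((∑ σ, ∑ τ, (ginv e σ * ginv d τ) * W σ τ μ ν)
            - (∑ σ, ∑ τ, (ginv d σ * ginv e τ) * W σ τ μ ν)) := by
    intro μ ν
    unfold CC
    have hsub : ∑ σ, ∑ τ, (ginv e σ * ginv d τ - ginv d σ * ginv e τ) * W σ τ μ ν
        = (∑ σ, ∑ τ, (ginv e σ * ginv d τ) * W σ τ μ ν)
          - (∑ σ, ∑ τ, (ginv d σ * ginv e τ) * W σ τ μ ν) := by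
      simp only [Fin.sum_univ_four]
      ring
    rw [hsub]
    ring
  simp only [hCC]
  rw [splitYc (fun μ ν => Yc ginv a p μ ν)
      (fun μ ν => ∑ σ, ginv e σ * W σ b μ ν) (fun μ ν => ∑ σ, ginv e σ * W σ c μ ν)
      (fun μ ν => ∑ σ, ginv d σ * W σ b μ ν) (fun μ ν => ∑ σ, ginv d σ * W σ c μ ν)
      (fun μ ν => ∑ σ, ∑ τ, (ginv e σ * ginv d τ) * W σ τ μ ν)
      (fun μ ν => ∑ σ, ∑ τ, (ginv d σ * ginv e τ) * W σ τ μ ν)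
      (-(dl c d)) (-(dl b d)) (dl c e) (dl b e) ((1/2) * g b c)]
  unfold dl
  ring

private lemma T1a (g ginv S : Fin 4 → Fin 4 → ℝ) (j p d e : Fin 4) :
    ∑ q, ∑ r, (S q e * g r d) * etaUp3 g ginv p q r j
      = Real.sqrt (-(Matrix.of g).det)
        * ∑ β, sqf S ginv e β * (∑ γ, (∑ r, g r d * ginv r γ) * Xc ginv j p β γ) := by
  unfold etaUp3 eta4 sqf Xc
  simp only [Fin.sum_univ_four]
  ring

private lemma sum_dl_mul' (t : Fin 4) (u : Fin 4 → ℝ) :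
    ∑ x, (if x = t then (1:ℝ) else 0) * u x = u t := by
  simp [ite_mul, one_mul, zero_mul, Finset.sum_ite_eq']

private lemma T1 (g ginv S : Fin 4 → Fin 4 → ℝ)
    (hg : ∀ a b, g a b = g b a)
    (hginv : ∀ a b, ∑ c, ginv a c * g c b = if a = b then (1 : ℝ) else 0)
    (j p d e : Fin 4) :
    ∑ q, ∑ r, (S q e * g r d) * etaUp3 g ginv p q r j
      = Real.sqrt (-(Matrix.of g).det) * ∑ β, sqf S ginv e β * Xc ginv j p β d := by
  rw [T1a]
  congr 1
  refine Finset.sum_congr rfl fun β _ => ?_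
  congr 1
  have h1 : ∀ γ : Fin 4, (∑ r, g r d * ginv r γ) = if γ = d then (1:ℝ) else 0 :=
    fun γ => L_Gg g ginv hg hginv γ d
  simp only [h1]
  exact sum_dl_mul' d (fun γ => Xc ginv j p β γ)

private lemma T2a (A : ℝ) (Z : Fin 4 → Fin 4 → Fin 4 → ℝ) (sq : Fin 4 → Fin 4 → ℝ)
    (X : Fin 4 → Fin 4 → Fin 4 → ℝ) :
    ∑ p, ∑ d, ∑ e, (A * ((1/2) * Z p d e)) * (A * ∑ β, sq e β * X p β d)
      = (A * A * (1/2)) * ∑ β, ∑ γ, ∑ p, X p β γ * (∑ e, sq e β * Z p γ e) := by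
  simp only [Fin.sum_univ_four]
  ring

private lemma T2b (g ginv S : Fin 4 → Fin 4 → ℝ)
    (W : Fin 4 → Fin 4 → Fin 4 → Fin 4 → ℝ) (a b c p β γ : Fin 4) :
    ∑ e, sqf S ginv e β * (∑ μ, ∑ ν, Yc ginv a p μ ν * CC g ginv W b c γ e μ ν)
      = ∑ μ, ∑ ν, Yc ginv a p μ ν * FFc g ginv S W b c β γ μ ν := by
  unfold FFc
  simp only [Fin.sum_univ_four]
  ring

private lemma T2c (X Y : Fin 4 → Fin 4 → Fin 4 → ℝ) (F : Fin 4 → Fin 4 → Fin 4 → Fin 4 → ℝ) :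
    ∑ β, ∑ γ, ∑ p, X p β γ * (∑ μ, ∑ ν, Y p μ ν * F β γ μ ν)
      = ∑ β, ∑ γ, ∑ μ, ∑ ν, F β γ μ ν * (∑ p, X p β γ * Y p μ ν) := by
  refine Finset.sum_congr rfl fun β _ => Finset.sum_congr rfl fun γ _ => ?_
  simp only [Fin.sum_univ_four]
  ring

private lemma pullScal (c2 : ℝ) (F P : Fin 4 → Fin 4 → Fin 4 → Fin 4 → ℝ) :
    (c2 * (1/2)) * (∑ β, ∑ γ, ∑ μ, ∑ ν, F β γ μ ν * P β γ μ ν)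
      = (1/2) * ∑ β, ∑ γ, ∑ μ, ∑ ν, F β γ μ ν * (c2 * P β γ μ ν) := by
  simp only [Fin.sum_univ_four]
  ring
-- ===== Block 4 =====
private lemma sum_dl_mul2 (t : Fin 4) (u : Fin 4 → ℝ) : ∑ x, dl x t * u x = u t := by
  simp [dl, ite_mul, one_mul, zero_mul, Finset.sum_ite_eq']

private lemma sum_collapse2 (u v : Fin 4) (F : Fin 4 → Fin 4 → ℝ) :
    ∑ μ, ∑ ν, F μ ν * (dl μ u * dl ν v) = F u v := by
  have h1 : ∀ μ : Fin 4, ∑ ν, F μ ν * (dl μ u * dl ν v) = dl μ u * F μ v := by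
    intro μ
    have h2 : ∀ ν : Fin 4, F μ ν * (dl μ u * dl ν v) = dl ν v * (dl μ u * F μ ν) :=
      fun ν => by ring
    simp only [h2]
    exact sum_dl_mul2 v (fun ν => dl μ u * F μ ν)
  simp only [h1]
  exact sum_dl_mul2 u (fun μ => F μ v)

private lemma T4gen (g : Fin 4 → Fin 4 → ℝ) (a j β γ : Fin 4) (F : Fin 4 → Fin 4 → ℝ) :
    ∑ μ, ∑ ν, F μ ν * BB g a j β γ μ ν
      = g a β * (F γ j - F j γ) - g a γ * (F β j - F j β) + g a j * (F β γ - F γ β) := by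
  have e : ∀ μ ν : Fin 4, F μ ν * BB g a j β γ μ ν
      = g a β * (F μ ν * (dl μ γ * dl ν j)) - g a β * (F μ ν * (dl μ j * dl ν γ))
        - g a γ * (F μ ν * (dl μ β * dl ν j)) + g a γ * (F μ ν * (dl μ j * dl ν β))
        + g a j * (F μ ν * (dl μ β * dl ν γ)) - g a j * (F μ ν * (dl μ γ * dl ν β)) := by
    intro μ ν; unfold BB; ring
  simp only [e]
  have hs : ∀ (C : ℝ) (u v : Fin 4),
      ∑ μ, ∑ ν, C * (F μ ν * (dl μ u * dl ν v)) = C * F u v := by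
    intro C u v
    have h0 : ∀ μ : Fin 4, ∑ ν, C * (F μ ν * (dl μ u * dl ν v))
        = C * ∑ ν, F μ ν * (dl μ u * dl ν v) := fun μ => (Finset.mul_sum _ _ _).symm
    simp only [h0]
    rw [← Finset.mul_sum, sum_collapse2]
  simp only [Finset.sum_add_distrib, Finset.sum_sub_distrib]
  rw [hs, hs, hs, hs, hs, hs]
  ring

section traces
variable (ginv : Fin 4 → Fin 4 → ℝ)
variable (W : Fin 4 → Fin 4 → Fin 4 → Fin 4 → ℝ)

private lemma trA (hWtr : ∀ b d, ∑ a, ∑ c, ginv a c * W a b c d = 0)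
    (hW2 : ∀ a b c d, W a b c d = - W a b d c) (u v : Fin 4) :
    ∑ x, ∑ y, ginv x y * W x u v y = 0 := by
  have e : ∀ x y : Fin 4, ginv x y * W x u v y = -(ginv x y * W x u y v) := by
    intro x y; rw [hW2 x u y v]; ring
  simp only [e, Finset.sum_neg_distrib]
  rw [hWtr u v, neg_zero]

private lemma trC (hWtr : ∀ b d, ∑ a, ∑ c, ginv a c * W a b c d = 0)
    (hW1 : ∀ a b c d, W a b c d = - W b a c d)
    (hW2 : ∀ a b c d, W a b c d = - W a b d c) (u v : Fin 4) :
    ∑ x, ∑ y, ginv x y * W u x v y = 0 := by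
  have e : ∀ x y : Fin 4, ginv x y * W u x v y = ginv x y * W x u y v := by
    intro x y
    rw [show W u x v y = W x u y v by rw [hW1 u x v y, hW2 x u v y]; ring]
  simp only [e]
  exact hWtr u v

private lemma tr13 (hg' : ∀ a b, ginv a b = ginv b a)
    (hWtr : ∀ b d, ∑ a, ∑ c, ginv a c * W a b c d = 0) (u v : Fin 4) :
    ∑ x, ∑ y, ginv x y * W y u x v = 0 := by
  have h1 : ∑ x, ∑ y, ginv x y * W y u x v = ∑ x, ∑ y, ginv y x * W y u x v :=
    Finset.sum_congr rfl fun x _ => Finset.sum_congr rfl fun y _ => by rw [hg' x y]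
  rw [h1, swap2 fun x y => ginv y x * W y u x v]
  exact hWtr u v

private lemma tr14 (hg' : ∀ a b, ginv a b = ginv b a)
    (hWtr : ∀ b d, ∑ a, ∑ c, ginv a c * W a b c d = 0)
    (hW2 : ∀ a b c d, W a b c d = - W a b d c) (u v : Fin 4) :
    ∑ x, ∑ y, ginv x y * W y u v x = 0 := by
  have e : ∀ x y : Fin 4, ginv x y * W y u v x = -(ginv x y * W y u x v) := by
    intro x y; rw [hW2 y u x v]; ring
  simp only [e, Finset.sum_neg_distrib]
  rw [tr13 ginv W hg' hWtr u v, neg_zero]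

private lemma tr23 (hg' : ∀ a b, ginv a b = ginv b a)
    (hWtr : ∀ b d, ∑ a, ∑ c, ginv a c * W a b c d = 0)
    (hW1 : ∀ a b c d, W a b c d = - W b a c d) (u v : Fin 4) :
    ∑ x, ∑ y, ginv x y * W u y x v = 0 := by
  have e : ∀ x y : Fin 4, ginv x y * W u y x v = -(ginv x y * W y u x v) := by
    intro x y; rw [hW1 u y x v]; ring
  simp only [e, Finset.sum_neg_distrib]
  rw [tr13 ginv W hg' hWtr u v, neg_zero]

private lemma tr24 (hg' : ∀ a b, ginv a b = ginv b a)
    (hWtr : ∀ b d, ∑ a, ∑ c, ginv a c * W a b c d = 0)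
    (hW1 : ∀ a b c d, W a b c d = - W b a c d)
    (hW2 : ∀ a b c d, W a b c d = - W a b d c) (u v : Fin 4) :
    ∑ x, ∑ y, ginv x y * W u y v x = 0 := by
  have e : ∀ x y : Fin 4, ginv x y * W u y v x = ginv x y * W y u x v := by
    intro x y
    rw [show W u y v x = W y u x v by rw [hW1 u y v x, hW2 y u v x]; ring]
  simp only [e]
  exact tr13 ginv W hg' hWtr u v

end traces

-- contraction helpers for the part lemmas
private lemma sqg (g ginv S : Fin 4 → Fin 4 → ℝ)
    (hg : ∀ a b, g a b = g b a)
    (hginv : ∀ a b, ∑ c, ginv a c * g c b = if a = b then (1 : ℝ) else 0)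
    (a e : Fin 4) : ∑ β, g a β * sqf S ginv e β = S a e := by
  unfold sqf
  have h1 : ∀ β : Fin 4, g a β * (∑ q, S q e * ginv q β)
      = ∑ q, S q e * (g a β * ginv q β) := by
    intro β; rw [Finset.mul_sum]; exact Finset.sum_congr rfl fun q _ => by ring
  simp only [h1]
  rw [swap2 fun β q => S q e * (g a β * ginv q β)]
  have h2 : ∀ q : Fin 4, ∑ β, S q e * (g a β * ginv q β)
      = (if q = a then (1:ℝ) else 0) * S q e := by
    intro q
    rw [show ∑ β, S q e * (g a β * ginv q β) = S q e * ∑ β, ginv q β * g a β by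
      rw [Finset.mul_sum]; exact Finset.sum_congr rfl fun β _ => by ring]
    rw [L_gG g ginv hg hginv q a]
    ring
  simp only [h2]
  exact sum_dl_mul' a (fun q => S q e)

private lemma sq_SGa (S ginv : Fin 4 → Fin 4 → ℝ)
    (hS : ∀ a b, S a b = S b a) (x β : Fin 4) :
    sqf S ginv x β = ∑ e, S x e * ginv e β := by
  unfold sqf
  exact Finset.sum_congr rfl fun q _ => by rw [hS q x]

private lemma S2_eq (S ginv : Fin 4 → Fin 4 → ℝ)
    (hg' : ∀ a b, ginv a b = ginv b a) (β σ : Fin 4) :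
    ∑ e, sqf S ginv e β * ginv e σ = ∑ p, ∑ q, ginv β p * ginv σ q * S p q := by
  unfold sqf
  have h1 : ∀ e : Fin 4, (∑ q, S q e * ginv q β) * ginv e σ
      = ∑ q, (S q e * ginv q β) * ginv e σ := fun e => Finset.sum_mul _ _ _
  simp only [h1]
  rw [swap2 fun e q => (S q e * ginv q β) * ginv e σ]
  exact Finset.sum_congr rfl fun p _ => Finset.sum_congr rfl fun q _ => by
    rw [hg' β p, hg' σ q]; ring

private lemma S2Ksym (S ginv : Fin 4 → Fin 4 → ℝ)
    (hS : ∀ a b, S a b = S b a) (d e : Fin 4) :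
    ∑ p, ∑ q, ginv d p * ginv e q * S p q = ∑ p, ∑ q, ginv e p * ginv d q * S p q := by
  rw [swap2 fun p q => ginv d p * ginv e q * S p q]
  exact Finset.sum_congr rfl fun p _ => Finset.sum_congr rfl fun q _ => by
    rw [hS q p]; ring

private lemma CCswap (g ginv : Fin 4 → Fin 4 → ℝ)
    (W : Fin 4 → Fin 4 → Fin 4 → Fin 4 → ℝ)
    (hW2 : ∀ a b c d, W a b c d = - W a b d c) (b c d e μ ν : Fin 4) :
    CC g ginv W b c d e ν μ = -CC g ginv W b c d e μ ν := by
  have hw : ∀ σ τ : Fin 4, W σ τ ν μ = -W σ τ μ ν := by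
    intro σ τ; rw [hW2 σ τ μ ν]; ring
  unfold CC
  simp only [Fin.sum_univ_four, hw]
  ring

private lemma FFswap (g ginv S : Fin 4 → Fin 4 → ℝ)
    (W : Fin 4 → Fin 4 → Fin 4 → Fin 4 → ℝ)
    (hW2 : ∀ a b c d, W a b c d = - W a b d c) (b c β γ μ ν : Fin 4) :
    FFc g ginv S W b c β γ ν μ = -FFc g ginv S W b c β γ μ ν := by
  unfold FFc
  have h := CCswap g ginv W hW2 b c γ
  simp only [fun e => h e μ ν]
  simp only [Fin.sum_univ_four]
  ring
-- ===== Block 5 : part lemmas =====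
private lemma FubP5A (ginv : Fin 4 → Fin 4 → ℝ) (f : Fin 4 → ℝ)
    (F : Fin 4 → Fin 4 → Fin 4 → ℝ) :
    ∑ γ, ∑ e, f e * (∑ σ, ∑ τ, (ginv e σ * ginv γ τ) * F σ τ γ)
      = ∑ σ, (∑ e, f e * ginv e σ) * (∑ x, ∑ y, ginv x y * F σ y x) := by
  simp only [Fin.sum_univ_four]
  ring

private lemma FubP5B (ginv : Fin 4 → Fin 4 → ℝ) (f : Fin 4 → ℝ)
    (F : Fin 4 → Fin 4 → Fin 4 → Fin 4 → ℝ) (j : Fin 4) :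
    ∑ γ, ∑ e, f e * (∑ σ, ∑ τ, (ginv γ σ * ginv e τ) * F σ τ γ j)
      = ∑ τ, (∑ e, f e * ginv e τ) * (∑ x, ∑ y, ginv x y * F y τ x j) := by
  simp only [Fin.sum_univ_four]
  ring

private lemma PA (g ginv S : Fin 4 → Fin 4 → ℝ)
    (W : Fin 4 → Fin 4 → Fin 4 → Fin 4 → ℝ)
    (hg : ∀ a b, g a b = g b a)
    (hginv : ∀ a b, ∑ c, ginv a c * g c b = if a = b then (1 : ℝ) else 0)
    (hW1 : ∀ a b c d, W a b c d = - W b a c d)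
    (hWtr : ∀ b d, ∑ a, ∑ c, ginv a c * W a b c d = 0)
    (a b c j : Fin 4) :
    ∑ β, ∑ γ, g a β * FFc g ginv S W b c β γ γ j
      = -(∑ σ, (∑ e, S a e * ginv e σ) * W σ b c j)
        - (∑ σ, (∑ e, S a e * ginv e σ) * W σ c b j) := by
  have hGsym := L_Gsym g ginv hg hginv
  have s1 : ∑ β, ∑ γ, g a β * FFc g ginv S W b c β γ γ j
      = ∑ γ, ∑ e, (∑ β, g a β * sqf S ginv e β) * CC g ginv W b c γ e γ j := by
    unfold FFc
    simp only [Fin.sum_univ_four]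
    ring
  rw [s1]
  simp only [sqg g ginv S hg hginv a]
  have e1 : ∀ γ e : Fin 4, S a e * CC g ginv W b c γ e γ j
      = -(dl c γ * (S a e * (∑ σ, ginv e σ * W σ b γ j)))
        - (dl b γ * (S a e * (∑ σ, ginv e σ * W σ c γ j)))
        + dl c e * (S a e * (∑ σ, ginv γ σ * W σ b γ j))
        + dl b e * (S a e * (∑ σ, ginv γ σ * W σ c γ j))
        + S a e * ((1/2) * g b c
            * (∑ σ, ∑ τ, (ginv e σ * ginv γ τ - ginv γ σ * ginv e τ) * W σ τ γ j)) := by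
    intro γ e; unfold CC; ring
  simp only [e1]
  simp only [Finset.sum_add_distrib, Finset.sum_sub_distrib, Finset.sum_neg_distrib]
  have hP1 : ∀ t u : Fin 4,
      (∑ γ, ∑ e, dl t γ * (S a e * (∑ σ, ginv e σ * W σ u γ j)))
        = ∑ σ, (∑ e, S a e * ginv e σ) * W σ u t j := by
    intro t u
    have h1 : ∀ γ : Fin 4, ∑ e, dl t γ * (S a e * (∑ σ, ginv e σ * W σ u γ j))
        = dl t γ * ∑ e, S a e * (∑ σ, ginv e σ * W σ u γ j) :=
      fun γ => (Finset.mul_sum _ _ _).symm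
    simp only [h1]
    rw [sum_dl_mul t (fun γ => ∑ e, S a e * (∑ σ, ginv e σ * W σ u γ j))]
    exact G2' (fun e => S a e) (fun σ => W σ u t j) (fun e σ => ginv e σ)
  have hP3 : ∀ t u : Fin 4,
      (∑ γ, ∑ e, dl t e * (S a e * (∑ σ, ginv γ σ * W σ u γ j))) = 0 := by
    intro t u
    have h1 : ∀ γ : Fin 4, ∑ e, dl t e * (S a e * (∑ σ, ginv γ σ * W σ u γ j))
        = (∑ e, dl t e * S a e) * (∑ σ, ginv γ σ * W σ u γ j) := by
      intro γ
      rw [Finset.sum_mul]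
      exact Finset.sum_congr rfl fun e _ => by ring
    simp only [h1]
    rw [sum_dl_mul t (fun e => S a e), ← Finset.mul_sum]
    rw [tr13 ginv W hGsym hWtr u j, mul_zero]
  have hP5 : (∑ γ, ∑ e, S a e * ((1/2) * g b c
      * (∑ σ, ∑ τ, (ginv e σ * ginv γ τ - ginv γ σ * ginv e τ) * W σ τ γ j))) = 0 := by
    have hsub : ∀ γ e : Fin 4, S a e * ((1/2) * g b c
        * (∑ σ, ∑ τ, (ginv e σ * ginv γ τ - ginv γ σ * ginv e τ) * W σ τ γ j))
        = ((1/2) * g b c) * ((S a e) * (∑ σ, ∑ τ, (ginv e σ * ginv γ τ) * W σ τ γ j))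
          - ((1/2) * g b c) * ((S a e) * (∑ σ, ∑ τ, (ginv γ σ * ginv e τ) * W σ τ γ j)) := by
      intro γ e
      have h2 : ∑ σ, ∑ τ, (ginv e σ * ginv γ τ - ginv γ σ * ginv e τ) * W σ τ γ j
          = (∑ σ, ∑ τ, (ginv e σ * ginv γ τ) * W σ τ γ j)
            - (∑ σ, ∑ τ, (ginv γ σ * ginv e τ) * W σ τ γ j) := by
        simp only [Fin.sum_univ_four]; ring
      rw [h2]; ring
    simp only [hsub]
    simp only [Finset.sum_sub_distrib]
    have hh1 : ∀ γ : Fin 4, ∑ e, ((1/2) * g b c) * ((S a e) * (∑ σ, ∑ τ, (ginv e σ * ginv γ τ) * W σ τ γ j))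
        = ((1/2) * g b c) * ∑ e, (S a e) * (∑ σ, ∑ τ, (ginv e σ * ginv γ τ) * W σ τ γ j) :=
      fun γ => (Finset.mul_sum _ _ _).symm
    have hh2 : ∀ γ : Fin 4, ∑ e, ((1/2) * g b c) * ((S a e) * (∑ σ, ∑ τ, (ginv γ σ * ginv e τ) * W σ τ γ j))
        = ((1/2) * g b c) * ∑ e, (S a e) * (∑ σ, ∑ τ, (ginv γ σ * ginv e τ) * W σ τ γ j) :=
      fun γ => (Finset.mul_sum _ _ _).symm
    simp only [hh1, hh2]
    rw [← Finset.mul_sum, ← Finset.mul_sum]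
    rw [FubP5A ginv (fun e => S a e) (fun σ τ γ => W σ τ γ j)]
    rw [FubP5B ginv (fun e => S a e) (fun σ τ γ jj => W σ τ γ jj) j]
    have hz1 : ∀ σ : Fin 4, (∑ x, ∑ y, ginv x y * W σ y x j) = 0 :=
      fun σ => tr23 ginv W hGsym hWtr hW1 σ j
    have hz2 : ∀ τ : Fin 4, (∑ x, ∑ y, ginv x y * W y τ x j) = 0 :=
      fun τ => tr13 ginv W hGsym hWtr τ j
    simp only [hz1, hz2, mul_zero, Finset.sum_const_zero, sub_zero]
  rw [hP1 c b, hP1 b c, hP3 c b, hP3 b c, hP5]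
  ring
-- ===== Block 6 : PC and PE =====
private lemma FubP5C (ginv : Fin 4 → Fin 4 → ℝ) (u w : Fin 4 → ℝ)
    (F : Fin 4 → Fin 4 → ℝ) :
    ∑ γ, ∑ e, u e * (w γ * (∑ σ, ∑ τ, (ginv e σ * ginv γ τ) * F σ τ))
      = ∑ σ, (∑ e, u e * ginv e σ) * (∑ τ, (∑ γ, w γ * ginv γ τ) * F σ τ) := by
  simp only [Fin.sum_univ_four]
  ring

private lemma FubP5D (ginv : Fin 4 → Fin 4 → ℝ) (u w : Fin 4 → ℝ)
    (F : Fin 4 → Fin 4 → ℝ) :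
    ∑ γ, ∑ e, u e * (w γ * (∑ σ, ∑ τ, (ginv γ σ * ginv e τ) * F σ τ))
      = ∑ τ, (∑ e, u e * ginv e τ) * (∑ σ, (∑ γ, w γ * ginv γ σ) * F σ τ) := by
  simp only [Fin.sum_univ_four]
  ring

private lemma G2'' (f : Fin 4 → ℝ) (m : Fin 4 → Fin 4 → ℝ) (k : Fin 4 → ℝ) :
    ∑ e, f e * (∑ σ, m e σ * k σ) = ∑ σ, (∑ e, f e * m e σ) * k σ :=
  G2' f k m

private lemma PC (g ginv S : Fin 4 → Fin 4 → ℝ)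
    (W : Fin 4 → Fin 4 → Fin 4 → Fin 4 → ℝ)
    (hg : ∀ a b, g a b = g b a)
    (hginv : ∀ a b, ∑ c, ginv a c * g c b = if a = b then (1 : ℝ) else 0)
    (hW1 : ∀ a b c d, W a b c d = - W b a c d)
    (hS : ∀ a b, S a b = S b a)
    (a b c j : Fin 4) :
    ∑ β, ∑ γ, g a γ * FFc g ginv S W b c β γ β j
      = -(g a c * (∑ β, ∑ σ, (∑ p, ∑ q, ginv β p * ginv σ q * S p q) * W σ b β j))
        - (g a b * (∑ β, ∑ σ, (∑ p, ∑ q, ginv β p * ginv σ q * S p q) * W σ c β j))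
        + (∑ β, (∑ e, S c e * ginv e β) * W a b β j)
        + (∑ β, (∑ e, S b e * ginv e β) * W a c β j)
        + g b c * (∑ β, ∑ σ, (∑ p, ∑ q, ginv β p * ginv σ q * S p q) * W σ a β j) := by
  have hGsym := L_Gsym g ginv hg hginv
  have s1 : ∑ β, ∑ γ, g a γ * FFc g ginv S W b c β γ β j
      = ∑ γ, ∑ β, ∑ e, g a γ * (sqf S ginv e β * CC g ginv W b c γ e β j) := by
    unfold FFc
    simp only [Fin.sum_univ_four]
    ring
  rw [s1]
  have e1 : ∀ γ β e : Fin 4, g a γ * (sqf S ginv e β * CC g ginv W b c γ e β j)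
      = -(dl c γ * (g a γ * (sqf S ginv e β * (∑ σ, ginv e σ * W σ b β j))))
        - (dl b γ * (g a γ * (sqf S ginv e β * (∑ σ, ginv e σ * W σ c β j))))
        + dl c e * (sqf S ginv e β * (g a γ * (∑ σ, ginv γ σ * W σ b β j)))
        + dl b e * (sqf S ginv e β * (g a γ * (∑ σ, ginv γ σ * W σ c β j)))
        + (1/2) * g b c * (sqf S ginv e β * (g a γ
            * (∑ σ, ∑ τ, (ginv e σ * ginv γ τ - ginv γ σ * ginv e τ) * W σ τ β j))) := by
    intro γ β e; unfold CC; ring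
  simp only [e1]
  simp only [Finset.sum_add_distrib, Finset.sum_sub_distrib, Finset.sum_neg_distrib]
  -- piece 1 / 2 : collapse γ = t via dl
  have hP1 : ∀ t u : Fin 4,
      (∑ γ, ∑ β, ∑ e, dl t γ * (g a γ * (sqf S ginv e β * (∑ σ, ginv e σ * W σ u β j))))
        = g a t * (∑ β, ∑ σ, (∑ p, ∑ q, ginv β p * ginv σ q * S p q) * W σ u β j) := by
    intro t u
    have h1 : ∀ γ : Fin 4,
        dl t γ * (∑ β, ∑ e, g a γ * (sqf S ginv e β * (∑ σ, ginv e σ * W σ u β j)))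
          = ∑ β, ∑ e, dl t γ * (g a γ * (sqf S ginv e β * (∑ σ, ginv e σ * W σ u β j))) := by
      intro γ
      rw [Finset.mul_sum]
      exact Finset.sum_congr rfl fun β _ => by rw [Finset.mul_sum]
    simp only [← h1]
    rw [sum_dl_mul t]
    have h2 : ∀ β : Fin 4, ∑ e, g a t * (sqf S ginv e β * (∑ σ, ginv e σ * W σ u β j))
        = g a t * ∑ e, sqf S ginv e β * (∑ σ, ginv e σ * W σ u β j) :=
      fun β => (Finset.mul_sum _ _ _).symm
    simp only [h2]
    rw [← Finset.mul_sum]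
    congr 1
    have h3 : ∀ β : Fin 4, ∑ e, sqf S ginv e β * (∑ σ, ginv e σ * W σ u β j)
        = ∑ σ, (∑ e, sqf S ginv e β * ginv e σ) * W σ u β j :=
      fun β => G2'' (fun e => sqf S ginv e β) (fun e σ => ginv e σ) (fun σ => W σ u β j)
    simp only [h3]
    simp only [S2_eq S ginv hGsym]
  -- piece 3 / 4 : collapse e = t via dl, then contract γ
  have hP3 : ∀ t u : Fin 4,
      (∑ γ, ∑ β, ∑ e, dl t e * (sqf S ginv e β * (g a γ * (∑ σ, ginv γ σ * W σ u β j))))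
        = ∑ β, (∑ e, S t e * ginv e β) * W a u β j := by
    intro t u
    have h1 : ∀ γ β : Fin 4,
        ∑ e, dl t e * (sqf S ginv e β * (g a γ * (∑ σ, ginv γ σ * W σ u β j)))
          = sqf S ginv t β * (g a γ * (∑ σ, ginv γ σ * W σ u β j)) :=
      fun γ β => sum_dl_mul t (fun e => sqf S ginv e β * (g a γ * (∑ σ, ginv γ σ * W σ u β j)))
    simp only [h1]
    rw [swap2 fun γ β => sqf S ginv t β * (g a γ * (∑ σ, ginv γ σ * W σ u β j))]
    refine Finset.sum_congr rfl fun β _ => ?_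
    rw [← Finset.mul_sum]
    have h2 : ∑ γ, g a γ * (∑ σ, ginv γ σ * W σ u β j)
        = ∑ σ, (∑ γ, g a γ * ginv γ σ) * W σ u β j :=
      G2' (fun γ => g a γ) (fun σ => W σ u β j) (fun γ σ => ginv γ σ)
    rw [h2]
    have h3 : ∀ σ : Fin 4, (∑ γ, g a γ * ginv γ σ) = if σ = a then (1:ℝ) else 0 :=
      fun σ => L_gG2 g ginv hg hginv a σ
    simp only [h3]
    rw [sum_dl_mul' a (fun σ => W σ u β j)]
    rw [sq_SGa S ginv hS t β]
  -- piece 5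
  have hP5 : (∑ γ, ∑ β, ∑ e, (1/2) * g b c * (sqf S ginv e β * (g a γ
        * (∑ σ, ∑ τ, (ginv e σ * ginv γ τ - ginv γ σ * ginv e τ) * W σ τ β j))))
      = g b c * (∑ β, ∑ σ, (∑ p, ∑ q, ginv β p * ginv σ q * S p q) * W σ a β j) := by
    have hsub : ∀ γ β e : Fin 4, (1/2) * g b c * (sqf S ginv e β * (g a γ
          * (∑ σ, ∑ τ, (ginv e σ * ginv γ τ - ginv γ σ * ginv e τ) * W σ τ β j)))
        = (1/2) * g b c * (sqf S ginv e β * (g a γ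
            * (∑ σ, ∑ τ, (ginv e σ * ginv γ τ) * W σ τ β j)))
          - (1/2) * g b c * (sqf S ginv e β * (g a γ
            * (∑ σ, ∑ τ, (ginv γ σ * ginv e τ) * W σ τ β j))) := by
      intro γ β e
      have h2 : ∑ σ, ∑ τ, (ginv e σ * ginv γ τ - ginv γ σ * ginv e τ) * W σ τ β j
          = (∑ σ, ∑ τ, (ginv e σ * ginv γ τ) * W σ τ β j)
            - (∑ σ, ∑ τ, (ginv γ σ * ginv e τ) * W σ τ β j) := by
        simp only [Fin.sum_univ_four]; ring
      rw [h2]; ring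
    simp only [hsub]
    simp only [Finset.sum_sub_distrib]
    -- reorder : move β to the outside and pull constants
    have swapin : ∀ (P : Fin 4 → Fin 4 → Fin 4 → ℝ),
        (∑ γ, ∑ β, ∑ e, (1/2) * g b c * P γ β e)
          = (1/2) * g b c * ∑ β, ∑ γ, ∑ e, P γ β e := by
      intro P
      simp only [Fin.sum_univ_four]
      ring
    rw [swapin, swapin]
    have hh1 : ∀ β : Fin 4, ∑ γ, ∑ e, sqf S ginv e β * (g a γ
          * (∑ σ, ∑ τ, (ginv e σ * ginv γ τ) * W σ τ β j))
        = ∑ σ, (∑ e, sqf S ginv e β * ginv e σ)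
            * (∑ τ, (∑ γ, g a γ * ginv γ τ) * W σ τ β j) := by
      intro β
      have := FubP5C ginv (fun e => sqf S ginv e β) (fun γ => g a γ) (fun σ τ => W σ τ β j)
      exact this
    have hh2 : ∀ β : Fin 4, ∑ γ, ∑ e, sqf S ginv e β * (g a γ
          * (∑ σ, ∑ τ, (ginv γ σ * ginv e τ) * W σ τ β j))
        = ∑ τ, (∑ e, sqf S ginv e β * ginv e τ)
            * (∑ σ, (∑ γ, g a γ * ginv γ σ) * W σ τ β j) := by
      intro β
      exact FubP5D ginv (fun e => sqf S ginv e β) (fun γ => g a γ) (fun σ τ => W σ τ β j)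
    simp only [hh1, hh2]
    have h3 : ∀ σ : Fin 4, (∑ γ, g a γ * ginv γ σ) = if σ = a then (1:ℝ) else 0 :=
      fun σ => L_gG2 g ginv hg hginv a σ
    simp only [h3]
    have h4 : ∀ β σ : Fin 4, (∑ τ, (if τ = a then (1:ℝ) else 0) * W σ τ β j) = W σ a β j :=
      fun β σ => sum_dl_mul' a (fun τ => W σ τ β j)
    have h5 : ∀ β τ : Fin 4, (∑ σ, (if σ = a then (1:ℝ) else 0) * W σ τ β j) = W a τ β j :=
      fun β τ => sum_dl_mul' a (fun σ => W σ τ β j)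
    simp only [h4, h5]
    simp only [S2_eq S ginv hGsym]
    have h6 : ∀ β τ : Fin 4, W a τ β j = -W τ a β j := fun β τ => hW1 a τ β j
    simp only [h6]
    have h7 : ∀ β : Fin 4, ∑ τ, (∑ p, ∑ q, ginv β p * ginv τ q * S p q) * -W τ a β j
        = -∑ τ, (∑ p, ∑ q, ginv β p * ginv τ q * S p q) * W τ a β j := by
      intro β
      rw [← Finset.sum_neg_distrib]
      exact Finset.sum_congr rfl fun τ _ => by ring
    simp only [h7, Finset.sum_neg_distrib]
    ring
  rw [hP1 c b, hP1 b c, hP3 c b, hP3 b c, hP5]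

private lemma PE (g ginv S : Fin 4 → Fin 4 → ℝ)
    (W : Fin 4 → Fin 4 → Fin 4 → Fin 4 → ℝ)
    (hg : ∀ a b, g a b = g b a)
    (hginv : ∀ a b, ∑ c, ginv a c * g c b = if a = b then (1 : ℝ) else 0)
    (hW1 : ∀ a b c d, W a b c d = - W b a c d)
    (hW2 : ∀ a b c d, W a b c d = - W a b d c)
    (hWtr : ∀ b d, ∑ a, ∑ c, ginv a c * W a b c d = 0)
    (b c : Fin 4) :
    ∑ β, ∑ γ, FFc g ginv S W b c β γ β γ
      = -(∑ β, ∑ σ, (∑ p, ∑ q, ginv β p * ginv σ q * S p q) * W σ b β c)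
        - (∑ β, ∑ σ, (∑ p, ∑ q, ginv β p * ginv σ q * S p q) * W σ c β b) := by
  have hGsym := L_Gsym g ginv hg hginv
  have s1 : ∑ β, ∑ γ, FFc g ginv S W b c β γ β γ
      = ∑ γ, ∑ β, ∑ e, sqf S ginv e β * CC g ginv W b c γ e β γ := by
    unfold FFc
    simp only [Fin.sum_univ_four]
    ring
  rw [s1]
  have e1 : ∀ γ β e : Fin 4, sqf S ginv e β * CC g ginv W b c γ e β γ
      = -(dl c γ * (sqf S ginv e β * (∑ σ, ginv e σ * W σ b β γ)))
        - (dl b γ * (sqf S ginv e β * (∑ σ, ginv e σ * W σ c β γ)))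
        + dl c e * (sqf S ginv e β * (∑ σ, ginv γ σ * W σ b β γ))
        + dl b e * (sqf S ginv e β * (∑ σ, ginv γ σ * W σ c β γ))
        + (1/2) * g b c * (sqf S ginv e β
            * (∑ σ, ∑ τ, (ginv e σ * ginv γ τ - ginv γ σ * ginv e τ) * W σ τ β γ)) := by
    intro γ β e; unfold CC; ring
  simp only [e1]
  simp only [Finset.sum_add_distrib, Finset.sum_sub_distrib, Finset.sum_neg_distrib]
  have hP1 : ∀ t u : Fin 4,
      (∑ γ, ∑ β, ∑ e, dl t γ * (sqf S ginv e β * (∑ σ, ginv e σ * W σ u β γ)))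
        = ∑ β, ∑ σ, (∑ p, ∑ q, ginv β p * ginv σ q * S p q) * W σ u β t := by
    intro t u
    have h1 : ∀ γ : Fin 4,
        dl t γ * (∑ β, ∑ e, sqf S ginv e β * (∑ σ, ginv e σ * W σ u β γ))
          = ∑ β, ∑ e, dl t γ * (sqf S ginv e β * (∑ σ, ginv e σ * W σ u β γ)) := by
      intro γ
      rw [Finset.mul_sum]
      exact Finset.sum_congr rfl fun β _ => by rw [Finset.mul_sum]
    simp only [← h1]
    rw [sum_dl_mul t]
    have h3 : ∀ β : Fin 4, ∑ e, sqf S ginv e β * (∑ σ, ginv e σ * W σ u β t)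
        = ∑ σ, (∑ e, sqf S ginv e β * ginv e σ) * W σ u β t :=
      fun β => G2'' (fun e => sqf S ginv e β) (fun e σ => ginv e σ) (fun σ => W σ u β t)
    simp only [h3]
    simp only [S2_eq S ginv hGsym]
  have hP3 : ∀ t u : Fin 4,
      (∑ γ, ∑ β, ∑ e, dl t e * (sqf S ginv e β * (∑ σ, ginv γ σ * W σ u β γ))) = 0 := by
    intro t u
    have h1 : ∀ γ β : Fin 4,
        ∑ e, dl t e * (sqf S ginv e β * (∑ σ, ginv γ σ * W σ u β γ))
          = sqf S ginv t β * (∑ σ, ginv γ σ * W σ u β γ) :=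
      fun γ β => sum_dl_mul t (fun e => sqf S ginv e β * (∑ σ, ginv γ σ * W σ u β γ))
    simp only [h1]
    rw [swap2 fun γ β => sqf S ginv t β * (∑ σ, ginv γ σ * W σ u β γ)]
    have h2 : ∀ β : Fin 4, ∑ γ, sqf S ginv t β * (∑ σ, ginv γ σ * W σ u β γ)
        = sqf S ginv t β * (∑ γ, ∑ σ, ginv γ σ * W σ u β γ) :=
      fun β => (Finset.mul_sum _ _ _).symm
    simp only [h2]
    have h3 : ∀ β : Fin 4, (∑ γ, ∑ σ, ginv γ σ * W σ u β γ) = 0 :=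
      fun β => tr14 ginv W hGsym hWtr hW2 u β
    simp only [h3, mul_zero, Finset.sum_const_zero]
  have hP5 : (∑ γ, ∑ β, ∑ e, (1/2) * g b c * (sqf S ginv e β
        * (∑ σ, ∑ τ, (ginv e σ * ginv γ τ - ginv γ σ * ginv e τ) * W σ τ β γ))) = 0 := by
    have hsub : ∀ γ β e : Fin 4, (1/2) * g b c * (sqf S ginv e β
          * (∑ σ, ∑ τ, (ginv e σ * ginv γ τ - ginv γ σ * ginv e τ) * W σ τ β γ))
        = (1/2) * g b c * (sqf S ginv e β
            * (∑ σ, ∑ τ, (ginv e σ * ginv γ τ) * W σ τ β γ))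
          - (1/2) * g b c * (sqf S ginv e β
            * (∑ σ, ∑ τ, (ginv γ σ * ginv e τ) * W σ τ β γ)) := by
      intro γ β e
      have h2 : ∑ σ, ∑ τ, (ginv e σ * ginv γ τ - ginv γ σ * ginv e τ) * W σ τ β γ
          = (∑ σ, ∑ τ, (ginv e σ * ginv γ τ) * W σ τ β γ)
            - (∑ σ, ∑ τ, (ginv γ σ * ginv e τ) * W σ τ β γ) := by
        simp only [Fin.sum_univ_four]; ring
      rw [h2]; ring
    simp only [hsub]
    simp only [Finset.sum_sub_distrib]
    have swapin : ∀ (P : Fin 4 → Fin 4 → Fin 4 → ℝ),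
        (∑ γ, ∑ β, ∑ e, (1/2) * g b c * P γ β e)
          = (1/2) * g b c * ∑ β, ∑ γ, ∑ e, P γ β e := by
      intro P
      simp only [Fin.sum_univ_four]
      ring
    rw [swapin, swapin]
    have hh1 : ∀ β : Fin 4, ∑ γ, ∑ e, sqf S ginv e β
          * (∑ σ, ∑ τ, (ginv e σ * ginv γ τ) * W σ τ β γ)
        = ∑ σ, (∑ e, sqf S ginv e β * ginv e σ)
            * (∑ x, ∑ y, ginv x y * W σ y β x) :=
      fun β => FubP5A ginv (fun e => sqf S ginv e β) (fun σ τ γ => W σ τ β γ)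
    have hh2 : ∀ β : Fin 4, ∑ γ, ∑ e, sqf S ginv e β
          * (∑ σ, ∑ τ, (ginv γ σ * ginv e τ) * W σ τ β γ)
        = ∑ τ, (∑ e, sqf S ginv e β * ginv e τ)
            * (∑ x, ∑ y, ginv x y * W y τ β x) :=
      fun β => FubP5B ginv (fun e => sqf S ginv e β) (fun σ τ γ _ => W σ τ β γ) b
    simp only [hh1, hh2]
    have hz1 : ∀ σ β : Fin 4, (∑ x, ∑ y, ginv x y * W σ y β x) = 0 :=
      fun σ β => tr24 ginv W hGsym hWtr hW1 hW2 σ β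
    have hz2 : ∀ τ β : Fin 4, (∑ x, ∑ y, ginv x y * W y τ β x) = 0 :=
      fun τ β => tr14 ginv W hGsym hWtr hW2 τ β
    simp only [hz1, hz2, mul_zero, Finset.sum_const_zero, sub_zero, zero_sub, neg_zero]
  rw [hP1 c b, hP1 b c, hP3 c b, hP3 b c, hP5]
  ring
-- ===== Block 7 : index gymnastics lemmas =====
section Mlem
variable (S ginv : Fin 4 → Fin 4 → ℝ)
variable (W : Fin 4 → Fin 4 → Fin 4 → Fin 4 → ℝ)

private lemma M1 (hW1 : ∀ a b c d, W a b c d = - W b a c d) (a b c j : Fin 4) :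
    ∑ σ, (∑ e, S a e * ginv e σ) * W σ b c j
      = -(∑ d, (∑ e, S a e * ginv e d) * W b d c j) := by
  rw [← Finset.sum_neg_distrib]
  exact Finset.sum_congr rfl fun σ _ => by rw [hW1 σ b c j]; ring

private lemma M2 (hW1 : ∀ a b c d, W a b c d = - W b a c d)
    (hW3 : ∀ a b c d, W a b c d = W c d a b) (a b c j : Fin 4) :
    ∑ σ, (∑ e, S a e * ginv e σ) * W σ c b j
      = -(∑ d, (∑ e, S a e * ginv e d) * W b j c d) := by
  rw [← Finset.sum_neg_distrib]
  exact Finset.sum_congr rfl fun σ _ => by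
    rw [hW3 b j c σ, hW1 c σ b j]; ring

private lemma M3 (hW2 : ∀ a b c d, W a b c d = - W a b d c) (a b c j : Fin 4) :
    ∑ β, (∑ e, S c e * ginv e β) * W a b β j
      = -(∑ d, (∑ e, S c e * ginv e d) * W a b j d) := by
  rw [← Finset.sum_neg_distrib]
  exact Finset.sum_congr rfl fun β _ => by rw [hW2 a b j β]; ring

private lemma M7 (hS : ∀ a b, S a b = S b a)
    (hW1 : ∀ a b c d, W a b c d = - W b a c d)
    (hW2 : ∀ a b c d, W a b c d = - W a b d c) (u v : Fin 4) :
    ∑ β, ∑ σ, (∑ p, ∑ q, ginv β p * ginv σ q * S p q) * W σ u β v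
      = ∑ d, ∑ e, (∑ p, ∑ q, ginv d p * ginv e q * S p q) * W u d v e := by
  have hw : ∀ σ β : Fin 4, W σ u β v = W u σ v β := by
    intro σ β
    rw [hW1 σ u β v, hW2 u σ β v]; ring
  have h1 : ∑ β, ∑ σ, (∑ p, ∑ q, ginv β p * ginv σ q * S p q) * W σ u β v
      = ∑ β, ∑ σ, (∑ p, ∑ q, ginv β p * ginv σ q * S p q) * W u σ v β :=
    Finset.sum_congr rfl fun β _ => Finset.sum_congr rfl fun σ _ => by rw [hw σ β]
  rw [h1, swap2 fun β σ => (∑ p, ∑ q, ginv β p * ginv σ q * S p q) * W u σ v β]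
  exact Finset.sum_congr rfl fun d _ => Finset.sum_congr rfl fun e _ => by
    rw [S2Ksym S ginv hS e d]

private lemma M8 (hW1 : ∀ a b c d, W a b c d = - W b a c d)
    (hW2 : ∀ a b c d, W a b c d = - W a b d c)
    (hW3 : ∀ a b c d, W a b c d = W c d a b) (b c : Fin 4) :
    ∑ β, ∑ σ, (∑ p, ∑ q, ginv β p * ginv σ q * S p q) * W σ c β b
      = ∑ d, ∑ e, (∑ p, ∑ q, ginv d p * ginv e q * S p q) * W b d c e := by
  refine Finset.sum_congr rfl fun β _ => Finset.sum_congr rfl fun σ _ => ?_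
  have hw : W σ c β b = W b β c σ := by
    rw [show W σ c β b = W c σ b β by rw [hW1 σ c β b, hW2 c σ β b]; ring]
    exact hW3 c σ b β
  rw [hw]

end Mlem
-- ===== Block 8 : main theorem =====
private lemma swap22 (f : Fin 4 → Fin 4 → Fin 4 → Fin 4 → ℝ) :
    ∑ q, ∑ r, ∑ d, ∑ e, f q r d e = ∑ d, ∑ e, ∑ q, ∑ r, f q r d e := by
  rw [swap4 f]
  exact swap4 fun r d e q => f q r d e

/-- Component form of the identity `*(𝒦_{abc}) = θ^{j} K_{jabc}`, where
`𝒦_{abc} = 2 Ω^{[ed]}{}_{abc}∧S_e∧θ_d`. -/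
theorem dual_K_threeform
    (g ginv : Fin 4 → Fin 4 → ℝ)
    (hg : ∀ a b, g a b = g b a)
    (hginv : ∀ a b, ∑ c, ginv a c * g c b = if a = b then (1 : ℝ) else 0)
    (hdet : (Matrix.of g).det < 0)
    (W : Fin 4 → Fin 4 → Fin 4 → Fin 4 → ℝ)
    (hW1 : ∀ a b c d, W a b c d = - W b a c d)
    (hW2 : ∀ a b c d, W a b c d = - W a b d c)
    (hW3 : ∀ a b c d, W a b c d = W c d a b)
    (hW4 : ∀ a b c d, W a b c d + W a c d b + W a d b c = 0)
    (hWtr : ∀ b d, ∑ a, ∑ c, ginv a c * W a b c d = 0)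
    (S : Fin 4 → Fin 4 → ℝ)
    (hS : ∀ a b, S a b = S b a)
    (j a b c : Fin 4) :
    (∑ p, ∑ q, ∑ r, ∑ d, ∑ e,
        (OmegaC g ginv W e d a b c p - OmegaC g ginv W d e a b c p) *
          S q e * g r d * etaUp3 g ginv p q r j)
      = Ktensor g ginv S W j a b c := by
  have hA : Real.sqrt (-(Matrix.of g).det) * Real.sqrt (-(Matrix.of g).det)
      = -(Matrix.of g).det := Real.mul_self_sqrt (by linarith)
  calc (∑ p, ∑ q, ∑ r, ∑ d, ∑ e,
        (OmegaC g ginv W e d a b c p - OmegaC g ginv W d e a b c p) *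
          S q e * g r d * etaUp3 g ginv p q r j)
      = ∑ p, ∑ d, ∑ e, (OmegaC g ginv W e d a b c p - OmegaC g ginv W d e a b c p)
          * (∑ q, ∑ r, (S q e * g r d) * etaUp3 g ginv p q r j) := by
        refine Finset.sum_congr rfl fun p _ => ?_
        rw [swap22 fun q r d e => (OmegaC g ginv W e d a b c p - OmegaC g ginv W d e a b c p) *
          S q e * g r d * etaUp3 g ginv p q r j]
        refine Finset.sum_congr rfl fun d _ => Finset.sum_congr rfl fun e _ => ?_
        rw [Finset.mul_sum]
        refine Finset.sum_congr rfl fun q _ => ?_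
        rw [Finset.mul_sum]
        exact Finset.sum_congr rfl fun r _ => by ring
    _ = ∑ p, ∑ d, ∑ e,
          (Real.sqrt (-(Matrix.of g).det)
            * ((1/2) * ∑ μ, ∑ ν, Yc ginv a p μ ν * CC g ginv W b c d e μ ν))
          * (Real.sqrt (-(Matrix.of g).det)
            * ∑ β, sqf S ginv e β * Xc ginv j p β d) := by
        simp only [OmD g ginv W a b c, T1 g ginv S hg hginv j]
    _ = (Real.sqrt (-(Matrix.of g).det) * Real.sqrt (-(Matrix.of g).det) * (1/2))
          * ∑ β, ∑ γ, ∑ p, Xc ginv j p β γ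
            * (∑ e, sqf S ginv e β * (∑ μ, ∑ ν, Yc ginv a p μ ν * CC g ginv W b c γ e μ ν)) := by
        exact T2a (Real.sqrt (-(Matrix.of g).det))
          (fun p d e => ∑ μ, ∑ ν, Yc ginv a p μ ν * CC g ginv W b c d e μ ν)
          (fun e β => sqf S ginv e β) (fun p β d => Xc ginv j p β d)
    _ = (Real.sqrt (-(Matrix.of g).det) * Real.sqrt (-(Matrix.of g).det) * (1/2))
          * ∑ β, ∑ γ, ∑ μ, ∑ ν, FFc g ginv S W b c β γ μ ν
            * (∑ p, Xc ginv j p β γ * Yc ginv a p μ ν) := by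
        simp only [T2b g ginv S W a b c]
        rw [T2c (fun p β γ => Xc ginv j p β γ) (fun p μ ν => Yc ginv a p μ ν)
          (fun β γ μ ν => FFc g ginv S W b c β γ μ ν)]
    _ = (1/2) * ∑ β, ∑ γ, ∑ μ, ∑ ν, FFc g ginv S W b c β γ μ ν
          * ((-(Matrix.of g).det) * (∑ p, Xc ginv j p β γ * Yc ginv a p μ ν)) := by
        rw [hA]
        exact pullScal (-(Matrix.of g).det) (fun β γ μ ν => FFc g ginv S W b c β γ μ ν)
          (fun β γ μ ν => ∑ p, Xc ginv j p β γ * Yc ginv a p μ ν)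
    _ = (1/2) * ∑ β, ∑ γ, ∑ μ, ∑ ν, FFc g ginv S W b c β γ μ ν * BB g a j β γ μ ν := by
        simp only [core g ginv hg hginv a j]
    _ = (1/2) * ∑ β, ∑ γ,
          (g a β * (FFc g ginv S W b c β γ γ j - FFc g ginv S W b c β γ j γ)
            - g a γ * (FFc g ginv S W b c β γ β j - FFc g ginv S W b c β γ j β)
            + g a j * (FFc g ginv S W b c β γ β γ - FFc g ginv S W b c β γ γ β)) := by
        congr 1
        exact Finset.sum_congr rfl fun β _ => Finset.sum_congr rfl fun γ _ =>
          T4gen g a j β γ (fun μ ν => FFc g ginv S W b c β γ μ ν)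
    _ = (1/2) * ∑ β, ∑ γ,
          (2 * (g a β * FFc g ginv S W b c β γ γ j)
            - 2 * (g a γ * FFc g ginv S W b c β γ β j)
            + 2 * (g a j * FFc g ginv S W b c β γ β γ)) := by
        congr 1
        refine Finset.sum_congr rfl fun β _ => Finset.sum_congr rfl fun γ _ => ?_
        rw [FFswap g ginv S W hW2 b c β γ γ j, FFswap g ginv S W hW2 b c β γ β j,
          FFswap g ginv S W hW2 b c β γ β γ]
        ring
    _ = (∑ β, ∑ γ, g a β * FFc g ginv S W b c β γ γ j)
          - (∑ β, ∑ γ, g a γ * FFc g ginv S W b c β γ β j)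
          + g a j * (∑ β, ∑ γ, FFc g ginv S W b c β γ β γ) := by
        simp only [Fin.sum_univ_four]
        ring
    _ = Ktensor g ginv S W j a b c := by
        rw [PA g ginv S W hg hginv hW1 hWtr a b c j,
            PC g ginv S W hg hginv hW1 hS a b c j,
            PE g ginv S W hg hginv hW1 hW2 hWtr b c]
        rw [M1 S ginv W hW1 a b c j, M2 S ginv W hW1 hW3 a b c j,
            M3 S ginv W hW2 a b c j, M3 S ginv W hW2 a c b j,
            M7 S ginv W hS hW1 hW2 b j, M7 S ginv W hS hW1 hW2 c j,
            M7 S ginv W hS hW1 hW2 a j, M7 S ginv W hS hW1 hW2 b c,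
            M8 S ginv W hW1 hW2 hW3 b c]
        unfold Ktensor
        ring
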